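/- arXiv:1402.4535 — 2 statements merged into one kernel-verified Lean document; each statement's English description precedes it below -/
import Mathlib

section
/- There exists a universal constant c > 0 such that for all integers m ≥ 1, t ≥ 1, and integer H with 2 ≤ H < 2^{m/400} satisfying t · m · ⌈log₂ H⌉ ≤ 2^{m/400}, and for every function A mapping t-tuples of valuations in {1, …, H}^m to menus (a deterministic sample-based auction-learning algorithm), there exists a probability distribution D supported on {1, …, H}^m such that E_{(v_1, …, v_t) ∼ D^t}[Rev_D(A(v_1, …, v_t))] ≤ c · OPT(D) / log₂ H. That is, exponentially many samples in m are needed to beat an O(1/log H) approximation of the optimal revenue. -/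
open MeasureTheory

/-- An entry of a menu: a lottery (vector of allocation probabilities) together with a price. -/
abbrev Entry (m : ℕ) := (Fin m → ℝ) × ℝ

/-- A lottery: nonnegative coordinates summing to at most 1. -/
def IsLottery (m : ℕ) (x : Fin m → ℝ) : Prop := (∀ j, 0 ≤ x j) ∧ ∑ j, x j ≤ 1

/-- A menu: a finite set of entries containing the null entry `(0, 0)`,
all of whose entries are lotteries. -/
def IsMenu (m : ℕ) (M : Finset (Entry m)) : Prop :=
  (0, 0) ∈ M ∧ ∀ e ∈ M, IsLottery m e.1

/-- Utility of entry `e` for a buyer with valuation `v`. -/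
def utility {m : ℕ} (v : Fin m → ℝ) (e : Entry m) : ℝ := (∑ j, v j * e.1 j) - e.2

/-- A selection rule for menu `M`: picks, for each valuation, a utility-maximizing entry of `M`. -/
def IsSelection {m : ℕ} (M : Finset (Entry m)) (s : (Fin m → ℝ) → Entry m) : Prop :=
  ∀ v, s v ∈ M ∧ ∀ e ∈ M, utility v e ≤ utility v (s v)

/-- Revenue of a selection rule `s` under distribution `D`: expected price paid. -/
noncomputable def revSel {m : ℕ} (D : Measure (Fin m → ℝ))
    (s : (Fin m → ℝ) → Entry m) : ℝ :=
  ∫ v, (s v).2 ∂D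

/-- Revenue of menu `M` under distribution `D`: supremum over selection rules. -/
noncomputable def Rev {m : ℕ} (D : Measure (Fin m → ℝ)) (M : Finset (Entry m)) : ℝ :=
  sSup {r | ∃ s, IsSelection M s ∧ r = revSel D s}

/-- Optimal revenue for a distribution `D`: supremum over all menus. -/
noncomputable def OPT {m : ℕ} (D : Measure (Fin m → ℝ)) : ℝ :=
  sSup {r | ∃ M : Finset (Entry m), IsMenu m M ∧ r = Rev D M}


open scoped ENNReal

/-- Sum of inverse powers of two over distinct naturals `≥ 1` is at most 1. -/
lemma sum_inv_pow_two_le (G : Finset ℕ) (hG : ∀ ℓ ∈ G, 1 ≤ ℓ) :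
    ∑ ℓ ∈ G, ((2:ℝ)^ℓ)⁻¹ ≤ 1 := by
  classical
  obtain ⟨n, hn⟩ : ∃ n, ∀ ℓ ∈ G, ℓ ≤ n := ⟨G.sup id, fun ℓ h => Finset.le_sup (f := id) h⟩
  have hsub : G ⊆ Finset.Icc 1 n := fun ℓ h => Finset.mem_Icc.2 ⟨hG ℓ h, hn ℓ h⟩
  have h1 : ∑ ℓ ∈ G, ((2:ℝ)^ℓ)⁻¹ ≤ ∑ ℓ ∈ Finset.Icc 1 n, ((2:ℝ)^ℓ)⁻¹ := by
    apply Finset.sum_le_sum_of_subset_of_nonneg hsub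
    intro i _ _; positivity
  have h2 : ∀ n : ℕ, ∑ ℓ ∈ Finset.Icc 1 n, ((2:ℝ)^ℓ)⁻¹ = 1 - ((2:ℝ)^n)⁻¹ := by
    intro n
    induction n with
    | zero => simp
    | succ k ih =>
      rw [Finset.sum_Icc_succ_top (by omega), ih]
      have : ((2:ℝ)^k)⁻¹ = 2 * ((2:ℝ)^(k+1))⁻¹ := by
        rw [pow_succ]; field_simp
      rw [this]; ring
  rw [h2] at h1
  have : (0:ℝ) < ((2:ℝ)^n)⁻¹ := by positivity
  linarith

/-- Abstract "equal-revenue budget" lemma: the key chain/telescoping argument.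
`X ℓ` is the in-set allocation of the (argmax) entry chosen at level `ℓ`, and
`y ℓ = u ℓ / 2^ℓ` the normalized buyer utility. -/
lemma budget_aux (G : Finset ℕ) (hG1 : ∀ ℓ ∈ G, 1 ≤ ℓ) (X y : ℕ → ℝ)
    (hy0 : ∀ ℓ ∈ G, 0 ≤ y ℓ)
    (hX1 : ∀ ℓ ∈ G, X ℓ ≤ 1)
    (hXy : ∀ ℓ ∈ G, -((2:ℝ)^ℓ)⁻¹ ≤ X ℓ - y ℓ)
    (hchain : ∀ a ∈ G, ∀ b ∈ G, b < a →
      ((2:ℝ)^b / (2:ℝ)^a) * y b + (1 - (2:ℝ)^b / (2:ℝ)^a) * X b ≤ y a) :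
    ∑ ℓ ∈ G, (X ℓ - y ℓ) ≤ 3 := by
  classical
  -- main claim by strong induction on the cardinality
  have main : ∀ (G' : Finset ℕ), G' ⊆ G → ∀ (hne : G'.Nonempty),
      ∑ ℓ ∈ G', (X ℓ - y ℓ) ≤
        X (G'.max' hne) + (1/2) * ∑ ℓ ∈ G'.erase (G'.max' hne), ((X ℓ - y ℓ) + ((2:ℝ)^ℓ)⁻¹) := by
    intro G'
    induction G' using Finset.strongInduction with
    | _ G' ih =>
      intro hsub hne
      set a := G'.max' hne with ha
      have haG' : a ∈ G' := G'.max'_mem hne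
      by_cases hrest : (G'.erase a).Nonempty
      · set b := (G'.erase a).max' hrest with hb
        have hbG' : b ∈ G'.erase a := (G'.erase a).max'_mem hrest
        have hbG'' : b ∈ G' := Finset.mem_of_mem_erase hbG'
        have hba : b < a := by
          have hne' : b ≠ a := Finset.ne_of_mem_erase hbG'
          exact lt_of_le_of_ne (G'.le_max' b hbG'') hne'
        have haG : a ∈ G := hsub haG'
        have hbG : b ∈ G := hsub hbG''
        -- step inequality : X a - y a ≤ (X a - X b) + (1/2) ((X b - y b) + 2⁻ᵇ)
        have hstep : X a - y a ≤ (X a - X b) + (1/2) * ((X b - y b) + ((2:ℝ)^b)⁻¹) := by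
          have hch := hchain a haG b hbG hba
          set δ : ℝ := (2:ℝ)^b / (2:ℝ)^a with hδ
          have hδ0 : 0 < δ := by positivity
          have hδhalf : δ ≤ 1/2 := by
            rw [hδ, div_le_iff₀ (by positivity)]
            have : (2:ℝ)^(b+1) ≤ (2:ℝ)^a := by
              apply pow_le_pow_right₀ (by norm_num); omega
            rw [pow_succ] at this; nlinarith
          have h1 : X a - y a ≤ X a - X b + δ * (X b - y b) := by nlinarith [hch]
          have h2 : δ * (X b - y b) ≤ (1/2) * ((X b - y b) + ((2:ℝ)^b)⁻¹) := by
            rcases le_or_gt 0 (X b - y b) with h | h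
            · nlinarith [hδhalf, hδ0.le, h, inv_nonneg.2 (pow_nonneg (by norm_num : (0:ℝ) ≤ 2) b)]
            · have hlb := hXy b hbG
              nlinarith
          linarith
        have hGG : G'.erase a ⊂ G' := Finset.erase_ssubset haG'
        have IH := ih (G'.erase a) hGG (hGG.subset.trans hsub) hrest
        have hsplit : ∑ ℓ ∈ G', (X ℓ - y ℓ) = (X a - y a) + ∑ ℓ ∈ G'.erase a, (X ℓ - y ℓ) := by
          rw [← Finset.add_sum_erase _ _ haG']
        have hsplit2 : ∑ ℓ ∈ G'.erase a, ((X ℓ - y ℓ) + ((2:ℝ)^ℓ)⁻¹) =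
            ((X b - y b) + ((2:ℝ)^b)⁻¹) +
              ∑ ℓ ∈ (G'.erase a).erase b, ((X ℓ - y ℓ) + ((2:ℝ)^ℓ)⁻¹) := by
          rw [← Finset.add_sum_erase _ _ hbG']
        rw [hsplit, hsplit2]
        have hbmax : b = (G'.erase a).max' hrest := hb
        rw [← hbmax] at IH
        linarith
      · -- G' = {a}
        have : G' = {a} := by
          apply Finset.eq_singleton_iff_unique_mem.2
          refine ⟨haG', fun x hx => ?_⟩
          by_contra hxa
          exact hrest ⟨x, Finset.mem_erase.2 ⟨hxa, hx⟩⟩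
        rw [this]
        simp only [Finset.max'_singleton, Finset.sum_singleton, Finset.erase_singleton,
          Finset.sum_empty]
        have := hy0 a (hsub haG')
        linarith
  by_cases hne : G.Nonempty
  · have h := main G (Finset.Subset.refl G) hne
    set a := G.max' hne
    have haG : a ∈ G := G.max'_mem hne
    have herase : ∑ ℓ ∈ G.erase a, ((X ℓ - y ℓ) + ((2:ℝ)^ℓ)⁻¹) ≤
        ∑ ℓ ∈ G, ((X ℓ - y ℓ) + ((2:ℝ)^ℓ)⁻¹) := by
      apply Finset.sum_le_sum_of_subset_of_nonneg (Finset.erase_subset _ _)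
      intro i hi _
      have := hXy i hi
      linarith
    have hsum2 : ∑ ℓ ∈ G, ((X ℓ - y ℓ) + ((2:ℝ)^ℓ)⁻¹) =
        (∑ ℓ ∈ G, (X ℓ - y ℓ)) + ∑ ℓ ∈ G, ((2:ℝ)^ℓ)⁻¹ := by
      rw [Finset.sum_add_distrib]
    have hgeom := sum_inv_pow_two_le G hG1
    have hXa := hX1 a haG
    set S := ∑ ℓ ∈ G, (X ℓ - y ℓ)
    rw [hsum2] at herase
    nlinarith
  · rw [Finset.not_nonempty_iff_eq_empty] at hne
    simp [hne]

/-- Counting bound: the number of `s`-subsets meeting a fixed `s`-set `S` in more than `s/2`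
elements is at most `C(s,k)·C(m,s-k)` with `k = s/2+1`. -/
lemma bad_count (m s : ℕ) (S : Finset (Fin m)) (hS : S.card = s) :
    ((Finset.powersetCard s (Finset.univ : Finset (Fin m))).filter
        (fun T => s < 2 * (S ∩ T).card)).card ≤
      Nat.choose s (s/2+1) * Nat.choose m (s - (s/2+1)) := by
  classical
  set k := s/2 + 1 with hk
  set Bad := (Finset.powersetCard s (Finset.univ : Finset (Fin m))).filter
      (fun T => s < 2 * (S ∩ T).card) with hBad
  -- choice of a k-subset of S ∩ T for each bad T
  have hchoice : ∀ T ∈ Bad, ∃ U, U ⊆ S ∩ T ∧ U.card = k := by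
    intro T hT
    rw [hBad, Finset.mem_filter] at hT
    obtain ⟨-, hT2⟩ := hT
    have : k ≤ (S ∩ T).card := by omega
    exact Finset.exists_subset_card_eq this
  choose U hU hUcard using hchoice
  set target := (Finset.powersetCard k S) ×ˢ
      (Finset.powersetCard (s - k) (Finset.univ : Finset (Fin m))) with htarget
  have hmap : ∀ T (hT : T ∈ Bad), (U T hT, T \ U T hT) ∈ target := by
    intro T hT
    have hTcard : T.card = s := by
      have := (Finset.mem_filter.1 hT).1
      exact (Finset.mem_powersetCard.1 this).2
    have hUT : U T hT ⊆ T := (hU T hT).trans Finset.inter_subset_right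
    have hUS : U T hT ⊆ S := (hU T hT).trans Finset.inter_subset_left
    rw [htarget, Finset.mem_product]
    constructor
    · exact Finset.mem_powersetCard.2 ⟨hUS, hUcard T hT⟩
    · refine Finset.mem_powersetCard.2 ⟨Finset.subset_univ _, ?_⟩
      rw [Finset.card_sdiff_of_subset hUT, hTcard, hUcard T hT]
  have hinj : ∀ T hT T' hT', (U T hT, T \ U T hT) = (U T' hT', T' \ U T' hT') → T = T' := by
    intro T hT T' hT' heq
    have h1 : U T hT = U T' hT' := congrArg Prod.fst heq
    have h2 : T \ U T hT = T' \ U T' hT' := congrArg Prod.snd heq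
    have hUT : U T hT ⊆ T := (hU T hT).trans Finset.inter_subset_right
    have hUT' : U T' hT' ⊆ T' := (hU T' hT').trans Finset.inter_subset_right
    have : U T hT ∪ (T \ U T hT) = U T' hT' ∪ (T' \ U T' hT') := by rw [h2, h1]
    rwa [Finset.union_sdiff_of_subset hUT, Finset.union_sdiff_of_subset hUT'] at this
  have hcard : Bad.card ≤ target.card := by
    apply Finset.card_le_card_of_injOn (fun T => if h : T ∈ Bad then (U T h, T \ U T h) else (∅, ∅))
    · intro T hT; have hT' : T ∈ Bad := hT; simp only [dif_pos hT']; exact hmap T hT'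
    · intro T hT T' hT' heq
      simp only [Finset.mem_coe] at hT hT'
      simp only [dif_pos hT, dif_pos hT'] at heq
      exact hinj T hT T' hT' heq
  calc Bad.card ≤ target.card := hcard
    _ = Nat.choose s k * Nat.choose m (s-k) := by
        rw [htarget, Finset.card_product, Finset.card_powersetCard, Finset.card_powersetCard,
          hS, Finset.card_univ, Fintype.card_fin]

/-- Existence of a large family of `s`-subsets of `Fin m` with pairwise intersections
of size at most `s/2`. -/
lemma family_exists (m s n : ℕ) (hs1 : 1 ≤ s)
    (hcount : n * (Nat.choose s (s/2+1) * Nat.choose m (s - (s/2+1))) < Nat.choose m s) :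
    ∃ SS : Fin n → Finset (Fin m), (∀ w, (SS w).card = s) ∧
      (∀ w w', w ≠ w' → 2 * ((SS w) ∩ (SS w')).card ≤ s) := by
  classical
  -- build a Finset family by induction
  have build : ∀ j, j ≤ n → ∃ F : Finset (Finset (Fin m)), F.card = j ∧
      (∀ S ∈ F, S.card = s) ∧
      (∀ S ∈ F, ∀ T ∈ F, S ≠ T → 2 * (S ∩ T).card ≤ s) := by
    intro j
    induction j with
    | zero => intro _; exact ⟨∅, by simp⟩
    | succ i ihj =>
      intro hi
      obtain ⟨F, hFcard, hFs, hFpair⟩ := ihj (by omega)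
      set BadAll := (Finset.powersetCard s (Finset.univ : Finset (Fin m))).filter
          (fun T => ∃ S ∈ F, s < 2 * (S ∩ T).card) with hBadAll
      have hBadAllsub : BadAll ⊆ F.biUnion (fun S =>
          (Finset.powersetCard s (Finset.univ : Finset (Fin m))).filter
            (fun T => s < 2 * (S ∩ T).card)) := by
        intro T hT
        rw [hBadAll, Finset.mem_filter] at hT
        obtain ⟨hT1, S, hSF, hS2⟩ := hT
        exact Finset.mem_biUnion.2 ⟨S, hSF, Finset.mem_filter.2 ⟨hT1, hS2⟩⟩
      have hBadcard : BadAll.card < Nat.choose m s := by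
        calc BadAll.card ≤ _ := Finset.card_le_card hBadAllsub
          _ ≤ ∑ S ∈ F, ((Finset.powersetCard s (Finset.univ : Finset (Fin m))).filter
              (fun T => s < 2 * (S ∩ T).card)).card := Finset.card_biUnion_le
          _ ≤ ∑ S ∈ F, Nat.choose s (s/2+1) * Nat.choose m (s - (s/2+1)) := by
              apply Finset.sum_le_sum
              intro S hS
              exact bad_count m s S (hFs S hS)
          _ = F.card * (Nat.choose s (s/2+1) * Nat.choose m (s - (s/2+1))) := by
              rw [Finset.sum_const, smul_eq_mul]
          _ ≤ n * (Nat.choose s (s/2+1) * Nat.choose m (s - (s/2+1))) := by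
              apply Nat.mul_le_mul_right
              omega
          _ < Nat.choose m s := hcount
      have hex : ∃ T ∈ Finset.powersetCard s (Finset.univ : Finset (Fin m)), T ∉ BadAll := by
        by_contra hcon
        push_neg at hcon
        have : Finset.powersetCard s (Finset.univ : Finset (Fin m)) ⊆ BadAll := hcon
        have := Finset.card_le_card this
        rw [Finset.card_powersetCard, Finset.card_univ, Fintype.card_fin] at this
        omega
      obtain ⟨T, hT1, hT2⟩ := hex
      have hTcard : T.card = s := (Finset.mem_powersetCard.1 hT1).2
      have hTgood : ∀ S ∈ F, 2 * (S ∩ T).card ≤ s := by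
        intro S hS
        by_contra hcon
        exact hT2 (Finset.mem_filter.2 ⟨hT1, S, hS, by omega⟩)
      have hTF : T ∉ F := by
        intro hTF
        have := hTgood T hTF
        rw [Finset.inter_self, hTcard] at this
        omega
      refine ⟨insert T F, ?_, ?_, ?_⟩
      · rw [Finset.card_insert_of_notMem hTF, hFcard]
      · intro S hS
        rcases Finset.mem_insert.1 hS with h | h
        · rw [h]; exact hTcard
        · exact hFs S h
      · intro S hS T' hT' hne
        rcases Finset.mem_insert.1 hS with h | h <;> rcases Finset.mem_insert.1 hT' with h' | h'
        · exact absurd (h.trans h'.symm) hne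
        · rw [h, Finset.inter_comm]; exact hTgood T' h'
        · rw [h']; exact hTgood S h
        · exact hFpair S h T' h' hne
  obtain ⟨F, hFcard, hFs, hFpair⟩ := build n le_rfl
  have e := F.equivFinOfCardEq hFcard
  refine ⟨fun w => (e.symm w : Finset (Fin m)), fun w => hFs _ (e.symm w).2, ?_⟩
  intro w w' hne
  apply hFpair _ (e.symm w).2 _ (e.symm w').2
  intro hcon
  exact hne (by
    have : e.symm w = e.symm w' := Subtype.ext hcon
    exact e.symm.injective this)

section DiscreteMeasure
variable {α : Type*} [MeasurableSpace α] [MeasurableSingletonClass α]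

lemma integrable_dirac' (f : α → ℝ) (a : α) : Integrable f (Measure.dirac a) := by
  have hae : f =ᵐ[Measure.dirac a] (fun _ => f a) := by
    rw [Filter.EventuallyEq, ae_iff]
    have hsub : {x | ¬ f x = f a} ⊆ {a}ᶜ := by
      intro x hx
      simp only [Set.mem_setOf_eq] at hx
      simp only [Set.mem_compl_iff, Set.mem_singleton_iff]
      intro h; exact hx (by rw [h])
    apply measure_mono_null hsub
    rw [Measure.dirac_apply' _ (measurableSet_singleton a).compl]
    simp
  exact (integrable_const (f a)).congr hae.symm

/-- The uniform distribution on the points `pts w`. -/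
noncomputable def unifD {n : ℕ} (pts : Fin n → α) : Measure α :=
  ((n : ℝ≥0∞))⁻¹ • ∑ w : Fin n, Measure.dirac (pts w)

lemma unifD_apply_of_mem {n : ℕ} (hn : 0 < n) (pts : Fin n → α) (s : Set α)
    (h : ∀ w, pts w ∈ s) : unifD pts s = 1 := by
  rw [unifD, Measure.smul_apply]
  rw [Measure.finset_sum_apply]
  have heach : ∀ w : Fin n, (Measure.dirac (pts w)) s = 1 := fun w =>
    Measure.dirac_apply_of_mem (h w)
  rw [Finset.sum_congr rfl (fun w _ => heach w), Finset.sum_const, Finset.card_univ,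
    Fintype.card_fin, nsmul_eq_mul, mul_one, smul_eq_mul]
  exact ENNReal.inv_mul_cancel (Nat.cast_ne_zero.2 hn.ne') (by simp)

lemma unifD_isProbability {n : ℕ} (hn : 0 < n) (pts : Fin n → α) :
    IsProbabilityMeasure (unifD pts) :=
  ⟨unifD_apply_of_mem hn pts Set.univ (fun _ => Set.mem_univ _)⟩

lemma integral_unifD {n : ℕ} (pts : Fin n → α) (f : α → ℝ) :
    ∫ x, f x ∂(unifD pts) = (n : ℝ)⁻¹ * ∑ w : Fin n, f (pts w) := by
  rw [unifD, integral_smul_measure,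
    integral_finset_sum_measure (fun w _ => integrable_dirac' f (pts w))]
  simp [integral_dirac, ENNReal.toReal_inv, smul_eq_mul]

lemma pi_unifD {n t : ℕ} (hn : 0 < n) (pts : Fin n → α) :
    Measure.pi (fun _ : Fin t => unifD pts) =
      (((n : ℝ≥0∞))^t)⁻¹ • ∑ ω : Fin t → Fin n, Measure.dirac (fun i => pts (ω i)) := by
  classical
  haveI hp : IsProbabilityMeasure (unifD pts) := unifD_isProbability hn pts
  apply Measure.pi_eq
  intro s hs
  have hrect : MeasurableSet (Set.univ.pi s) := MeasurableSet.univ_pi hs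
  rw [Measure.smul_apply]
  rw [Measure.finset_sum_apply]
  have heach : ∀ ω : Fin t → Fin n, (Measure.dirac (fun i => pts (ω i))) (Set.univ.pi s) =
      ∏ i : Fin t, (if pts (ω i) ∈ s i then (1:ℝ≥0∞) else 0) := by
    intro ω
    rw [Measure.dirac_apply' _ hrect]
    by_cases hmem : (fun i => pts (ω i)) ∈ Set.univ.pi s
    · rw [Set.indicator_of_mem hmem]
      have : ∀ i : Fin t, pts (ω i) ∈ s i := fun i => hmem i (Set.mem_univ i)
      simp [this]
    · rw [Set.indicator_of_notMem hmem]
      rw [Set.mem_pi] at hmem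
      push_neg at hmem
      obtain ⟨i, _, hi⟩ := hmem
      rw [eq_comm, Finset.prod_eq_zero (Finset.mem_univ i)]
      simp [hi]
  rw [Finset.sum_congr rfl (fun ω _ => heach ω)]
  -- swap sum and product
  have hswap : ∑ ω : Fin t → Fin n, ∏ i : Fin t, (if pts (ω i) ∈ s i then (1:ℝ≥0∞) else 0) =
      ∏ i : Fin t, ∑ w : Fin n, (if pts w ∈ s i then (1:ℝ≥0∞) else 0) := by
    rw [Finset.prod_univ_sum]
    rw [← Fintype.piFinset_univ]
  rw [hswap]
  have hD : ∀ i : Fin t, (unifD pts) (s i) =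
      (n : ℝ≥0∞)⁻¹ * ∑ w : Fin n, (if pts w ∈ s i then (1:ℝ≥0∞) else 0) := by
    intro i
    rw [unifD, Measure.smul_apply, smul_eq_mul, Measure.finset_sum_apply]
    congr 1
    apply Finset.sum_congr rfl
    intro w _
    rw [Measure.dirac_apply' _ (hs i)]
    by_cases h : pts w ∈ s i <;> simp [h]
  rw [Finset.prod_congr rfl (fun i _ => hD i), Finset.prod_mul_distrib, Finset.prod_const,
    Finset.card_univ, Fintype.card_fin, smul_eq_mul, ENNReal.inv_pow]

lemma integral_pi_unifD {n t : ℕ} (hn : 0 < n) (pts : Fin n → α)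
    (F : (Fin t → α) → ℝ) :
    ∫ x, F x ∂(Measure.pi (fun _ : Fin t => unifD pts)) =
      ((n : ℝ)^t)⁻¹ * ∑ ω : Fin t → Fin n, F (fun i => pts (ω i)) := by
  rw [pi_unifD hn pts, integral_smul_measure,
    integral_finset_sum_measure (fun ω _ => integrable_dirac' F _)]
  simp [integral_dirac, ENNReal.toReal_inv, smul_eq_mul]

end DiscreteMeasure

/-- Marginalizing out one independent coordinate of a product prior. -/
lemma marginal_eq {N L : ℕ} (hL : 0 < L) (q : Fin L → ℝ)
    (hq1 : ∑ i, q i = 1) (w : Fin N) (Φ : (Fin N → Fin L) → Fin L → ℝ)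
    (hinv : ∀ σ σ' : Fin N → Fin L, (∀ j, j ≠ w → σ j = σ' j) → ∀ i, Φ σ i = Φ σ' i) :
    ∑ σ : Fin N → Fin L, (∏ j, q (σ j)) * Φ σ (σ w) =
      ∑ σ : Fin N → Fin L, (∏ j, q (σ j)) * (∑ i, q i * Φ σ i) := by
  classical
  set E := Equiv.piSplitAt w (fun _ : Fin N => Fin L) with hE
  have hsymm_w : ∀ (a : Fin L) (ρ : {j : Fin N // j ≠ w} → Fin L), E.symm (a, ρ) w = a := by
    intro a ρ
    simp [hE, Equiv.piSplitAt]
  have hsymm_ne : ∀ (a : Fin L) (ρ : {j : Fin N // j ≠ w} → Fin L) (j : Fin N) (h : j ≠ w),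
      E.symm (a, ρ) j = ρ ⟨j, h⟩ := by
    intro a ρ j h
    simp [hE, Equiv.piSplitAt, h]
  set i0 : Fin L := ⟨0, hL⟩ with hi0
  set Ψ : ({j : Fin N // j ≠ w} → Fin L) → Fin L → ℝ := fun ρ i => Φ (E.symm (i0, ρ)) i with hΨ
  have hPhiPsi : ∀ (a : Fin L) (ρ) (i : Fin L), Φ (E.symm (a, ρ)) i = Ψ ρ i := by
    intro a ρ i
    apply hinv
    intro j hj
    rw [hsymm_ne a ρ j hj, hsymm_ne i0 ρ j hj]
  set Q : ({j : Fin N // j ≠ w} → Fin L) → ℝ := fun ρ => ∏ j', q (ρ j') with hQ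
  have hprodsplit : ∀ (a : Fin L) (ρ), (∏ j, q (E.symm (a, ρ) j)) = q a * Q ρ := by
    intro a ρ
    rw [← Finset.mul_prod_erase Finset.univ _ (Finset.mem_univ w), hsymm_w]
    congr 1
    rw [Finset.prod_subtype (Finset.univ.erase w) (p := fun j => j ≠ w)
      (fun x => by simp [Finset.mem_erase])]
    apply Finset.prod_congr rfl
    intro j' _
    rw [hsymm_ne a ρ j' j'.2]
  have hre : ∀ (F : (Fin N → Fin L) → ℝ), ∑ σ : Fin N → Fin L, F σ =
      ∑ p : Fin L × ({j : Fin N // j ≠ w} → Fin L), F (E.symm p) := by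
    intro F
    rw [Equiv.sum_comp E.symm F]
  rw [hre, hre (fun σ => (∏ j, q (σ j)) * (∑ i, q i * Φ σ i)), Fintype.sum_prod_type,
    Fintype.sum_prod_type]
  have hLHS : ∀ (a : Fin L) (ρ),
      (∏ j, q (E.symm (a, ρ) j)) * Φ (E.symm (a, ρ)) (E.symm (a, ρ) w) =
        q a * (Q ρ * Ψ ρ a) := by
    intro a ρ
    rw [hprodsplit, hsymm_w, hPhiPsi]
    ring
  have hRHS : ∀ (a : Fin L) (ρ),
      (∏ j, q (E.symm (a, ρ) j)) * (∑ i, q i * Φ (E.symm (a, ρ)) i) =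
        q a * (Q ρ * (∑ i, q i * Ψ ρ i)) := by
    intro a ρ
    rw [hprodsplit]
    rw [Finset.sum_congr rfl (fun i _ => by rw [hPhiPsi a ρ i])]
    ring
  rw [Finset.sum_congr rfl (fun a _ => Finset.sum_congr rfl (fun ρ _ => hLHS a ρ)),
    Finset.sum_congr rfl (fun a _ => Finset.sum_congr rfl (fun ρ _ => hRHS a ρ))]
  have hL2 : ∀ a : Fin L, ∑ ρ, q a * (Q ρ * (∑ i, q i * Ψ ρ i)) =
      q a * ∑ ρ, Q ρ * (∑ i, q i * Ψ ρ i) := by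
    intro a
    rw [Finset.mul_sum]
  rw [Finset.sum_congr rfl (fun a _ => hL2 a), ← Finset.sum_mul, hq1, one_mul]
  rw [Finset.sum_comm]
  apply Finset.sum_congr rfl
  intro ρ _
  rw [Finset.mul_sum]
  apply Finset.sum_congr rfl
  intro a _
  ring

/-- Conditional bound: if the conditional expectation over the hidden coordinate `w` is at
most `C` for every fixed rest, the full expectation is at most `C`. -/
lemma cond_bound {N L : ℕ} (hL : 0 < L) (q : Fin L → ℝ) (hq0 : ∀ i, 0 ≤ q i)
    (hq1 : ∑ i, q i = 1) (w : Fin N) (Φ : (Fin N → Fin L) → Fin L → ℝ)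
    (hinv : ∀ σ σ' : Fin N → Fin L, (∀ j, j ≠ w → σ j = σ' j) → ∀ i, Φ σ i = Φ σ' i)
    (C : ℝ) (hΦ : ∀ σ, ∑ i, q i * Φ σ i ≤ C) :
    ∑ σ : Fin N → Fin L, (∏ j, q (σ j)) * Φ σ (σ w) ≤ C := by
  rw [marginal_eq hL q hq1 w Φ hinv]
  have hP0 : ∀ σ : Fin N → Fin L, 0 ≤ ∏ j, q (σ j) :=
    fun σ => Finset.prod_nonneg (fun j _ => hq0 _)
  have hP1 : ∑ σ : Fin N → Fin L, ∏ j, q (σ j) = 1 := by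
    have := Finset.prod_univ_sum (fun _ : Fin N => (Finset.univ : Finset (Fin L)))
      (fun _ i => q i)
    rw [Fintype.piFinset_univ] at this
    simp only [← this, hq1, Finset.prod_const_one]
  calc ∑ σ : Fin N → Fin L, (∏ j, q (σ j)) * (∑ i, q i * Φ σ i)
      ≤ ∑ σ : Fin N → Fin L, (∏ j, q (σ j)) * C := by
        apply Finset.sum_le_sum
        intro σ _
        exact mul_le_mul_of_nonneg_left (hΦ σ) (hP0 σ)
    _ = C := by rw [← Finset.sum_mul, hP1, one_mul]

section Menus
variable {m : ℕ}

/-- The valuation giving value `2^ℓ` to items in `S` and `1` to the rest. -/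
noncomputable def vp (S : Finset (Fin m)) (ℓ : ℕ) : Fin m → ℝ :=
  fun j => if j ∈ S then (2:ℝ)^ℓ else 1

/-- Prices of utility-maximizing entries. -/
def gset (M : Finset (Entry m)) (v : Fin m → ℝ) : Set ℝ :=
  {p | ∃ e ∈ M, (∀ e' ∈ M, utility v e' ≤ utility v e) ∧ p = e.2}

/-- Largest price among utility-maximizing entries. -/
noncomputable def gmax (M : Finset (Entry m)) (v : Fin m → ℝ) : ℝ := sSup (gset M v)

/-- Nonnegative part of `gmax`. -/
noncomputable def gp (M : Finset (Entry m)) (v : Fin m → ℝ) : ℝ := max (gmax M v) 0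

lemma gp_nonneg (M : Finset (Entry m)) (v : Fin m → ℝ) : 0 ≤ gp M v := le_max_right _ _

lemma gset_finite (M : Finset (Entry m)) (v : Fin m → ℝ) : (gset M v).Finite := by
  apply Set.Finite.subset (Set.Finite.image (fun e : Entry m => e.2) M.finite_toSet)
  rintro p ⟨e, heM, -, rfl⟩
  exact ⟨e, heM, rfl⟩

lemma gset_nonempty (M : Finset (Entry m)) (hne : M.Nonempty) (v : Fin m → ℝ) :
    (gset M v).Nonempty := by
  obtain ⟨e, heM, hmax⟩ := Finset.exists_max_image M (utility v) hne
  exact ⟨e.2, e, heM, hmax, rfl⟩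

lemma gmax_mem (M : Finset (Entry m)) (hne : M.Nonempty) (v : Fin m → ℝ) :
    gmax M v ∈ gset M v :=
  Set.Nonempty.csSup_mem (gset_nonempty M hne v) (gset_finite M v)

lemma le_gmax (M : Finset (Entry m)) (v : Fin m → ℝ) {p : ℝ} (hp : p ∈ gset M v) :
    p ≤ gmax M v :=
  le_csSup (gset_finite M v).bddAbove hp

/-- utility at the valuation `vp S ℓ` in terms of in-set and total allocations. -/
lemma utility_vp (S : Finset (Fin m)) (ℓ : ℕ) (e : Entry m) :
    utility (vp S ℓ) e = ((2:ℝ)^ℓ - 1) * (∑ j ∈ S, e.1 j) + (∑ j, e.1 j) - e.2 := by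
  classical
  unfold utility vp
  congr 1
  have : ∀ j : Fin m, (if j ∈ S then (2:ℝ)^ℓ else 1) * e.1 j =
      (if j ∈ S then ((2:ℝ)^ℓ - 1) * e.1 j else 0) + e.1 j := by
    intro j
    by_cases h : j ∈ S <;> simp [h] <;> ring
  rw [Finset.sum_congr rfl (fun j _ => this j), Finset.sum_add_distrib]
  congr 1
  rw [Finset.sum_ite_mem, Finset.univ_inter, Finset.mul_sum]

lemma utility_zero (v : Fin m → ℝ) : utility v ((0,0) : Entry m) = 0 := by
  simp [utility]

/-- The maximal utility is nonnegative for any menu. -/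
lemma maxU_nonneg (M : Finset (Entry m)) (hM : IsMenu m M) (v : Fin m → ℝ) (e : Entry m)
    (he : e ∈ M) (hmax : ∀ e' ∈ M, utility v e' ≤ utility v e) : 0 ≤ utility v e := by
  have := hmax (0,0) hM.1
  rwa [utility_zero] at this

lemma lottery_sum_le {M : Finset (Entry m)} (hM : IsMenu m M) {e : Entry m} (he : e ∈ M)
    (S : Finset (Fin m)) : (∑ j ∈ S, e.1 j) ≤ 1 ∧ 0 ≤ (∑ j ∈ S, e.1 j) ∧
      (∑ j ∈ S, e.1 j) ≤ (∑ j, e.1 j) ∧ (∑ j, e.1 j) ≤ 1 := by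
  obtain ⟨hpos, htot⟩ := hM.2 e he
  have hsub : (∑ j ∈ S, e.1 j) ≤ (∑ j, e.1 j) :=
    Finset.sum_le_sum_of_subset_of_nonneg (Finset.subset_univ S) (fun j _ _ => hpos j)
  exact ⟨hsub.trans htot, Finset.sum_nonneg (fun j _ => hpos j), hsub, htot⟩

/-- Any utility-maximizing price at `vp S ℓ` is at most `2^ℓ`. -/
lemma gset_le (M : Finset (Entry m)) (hM : IsMenu m M) (S : Finset (Fin m)) (ℓ : ℕ)
    {p : ℝ} (hp : p ∈ gset M (vp S ℓ)) : p ≤ (2:ℝ)^ℓ := by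
  obtain ⟨e, heM, hmax, rfl⟩ := hp
  have hu0 : 0 ≤ utility (vp S ℓ) e := maxU_nonneg M hM _ e heM hmax
  rw [utility_vp] at hu0
  obtain ⟨hX1, hX0, hXT, hT1⟩ := lottery_sum_le hM heM S
  have h2 : (1:ℝ) ≤ (2:ℝ)^ℓ := one_le_pow₀ (by norm_num)
  nlinarith

lemma gmax_le (M : Finset (Entry m)) (hM : IsMenu m M) (hne : M.Nonempty) (S : Finset (Fin m))
    (ℓ : ℕ) : gmax M (vp S ℓ) ≤ (2:ℝ)^ℓ :=
  csSup_le (gset_nonempty M hne _) (fun p hp => gset_le M hM S ℓ hp)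

lemma gp_le (M : Finset (Entry m)) (hM : IsMenu m M) (hne : M.Nonempty) (S : Finset (Fin m))
    (ℓ : ℕ) : gp M (vp S ℓ) ≤ (2:ℝ)^ℓ := by
  apply max_le (gmax_le M hM hne S ℓ)
  positivity


/-- **Per-set budget lemma**: for any menu, the equal-revenue-weighted sum over levels of the
best argmax price at `vp S ℓ` is at most 4. -/
lemma menu_budget {m : ℕ} (M : Finset (Entry m)) (hM : IsMenu m M) (S : Finset (Fin m)) (L : ℕ) :
    ∑ ℓ ∈ Finset.Icc 1 L, ((2:ℝ)^ℓ)⁻¹ * gp M (vp S ℓ) ≤ 4 := by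
  classical
  have hne : M.Nonempty := ⟨(0,0), hM.1⟩
  set u : ℕ → ℝ := fun ℓ => M.sup' hne (utility (vp S ℓ)) with hu
  set y : ℕ → ℝ := fun ℓ => u ℓ / 2^ℓ with hy
  set G : Finset ℕ := (Finset.Icc 1 L).filter (fun ℓ => 0 ≤ gmax M (vp S ℓ)) with hG
  have hwit : ∀ ℓ : ℕ, ∃ e : Entry m, e ∈ M ∧
      (∀ e' ∈ M, utility (vp S ℓ) e' ≤ utility (vp S ℓ) e) ∧ gmax M (vp S ℓ) = e.2 := by
    intro ℓ
    obtain ⟨e, heM, hmax, hp⟩ := gmax_mem M hne (vp S ℓ)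
    exact ⟨e, heM, hmax, hp⟩
  choose E hEM hEmax hEp using hwit
  set X : ℕ → ℝ := fun ℓ => ∑ j ∈ S, (E ℓ).1 j with hX
  set T : ℕ → ℝ := fun ℓ => ∑ j, (E ℓ).1 j with hT
  have hp2 : ∀ ℓ : ℕ, (0:ℝ) < 2^ℓ := fun ℓ => by positivity
  have hUe : ∀ ℓ, u ℓ = utility (vp S ℓ) (E ℓ) := by
    intro ℓ
    apply le_antisymm
    · exact Finset.sup'_le hne _ (fun e' he' => hEmax ℓ e' he')
    · exact Finset.le_sup' _ (hEM ℓ)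
  have hUval : ∀ ℓ, u ℓ = ((2:ℝ)^ℓ - 1) * X ℓ + T ℓ - gmax M (vp S ℓ) := by
    intro ℓ
    rw [hUe ℓ, utility_vp, hEp ℓ]
  have hbounds : ∀ ℓ, X ℓ ≤ 1 ∧ 0 ≤ X ℓ ∧ X ℓ ≤ T ℓ ∧ T ℓ ≤ 1 :=
    fun ℓ => lottery_sum_le hM (hEM ℓ) S
  have hu0 : ∀ ℓ, 0 ≤ u ℓ := by
    intro ℓ
    rw [hUe ℓ]
    exact maxU_nonneg M hM _ _ (hEM ℓ) (hEmax ℓ)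
  have hG1 : ∀ ℓ ∈ G, 1 ≤ ℓ := fun ℓ h => (Finset.mem_Icc.1 (Finset.mem_filter.1 h).1).1
  have hGg : ∀ ℓ ∈ G, 0 ≤ gmax M (vp S ℓ) := fun ℓ h => (Finset.mem_filter.1 h).2
  have hy0 : ∀ ℓ ∈ G, 0 ≤ y ℓ := fun ℓ _ => div_nonneg (hu0 ℓ) (hp2 ℓ).le
  have hX1 : ∀ ℓ ∈ G, X ℓ ≤ 1 := fun ℓ _ => (hbounds ℓ).1
  have huB : ∀ ℓ ∈ G, u ℓ ≤ 2^ℓ * X ℓ + 1 := by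
    intro ℓ hℓ
    have h1 := hUval ℓ
    have h2 := hGg ℓ hℓ
    obtain ⟨hX1', hX0, hXT, hT1⟩ := hbounds ℓ
    nlinarith
  have hXy : ∀ ℓ ∈ G, -((2:ℝ)^ℓ)⁻¹ ≤ X ℓ - y ℓ := by
    intro ℓ hℓ
    have key : X ℓ - y ℓ + ((2:ℝ)^ℓ)⁻¹ = (X ℓ * 2^ℓ - u ℓ + 1) / 2^ℓ := by
      rw [hy, eq_div_iff (hp2 ℓ).ne']
      field_simp
    have h4 : (0:ℝ) ≤ (X ℓ * 2^ℓ - u ℓ + 1) / 2^ℓ :=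
      div_nonneg (by nlinarith [huB ℓ hℓ]) (hp2 ℓ).le
    rw [← key] at h4
    linarith
  have hchain : ∀ a ∈ G, ∀ b ∈ G, b < a →
      ((2:ℝ)^b / (2:ℝ)^a) * y b + (1 - (2:ℝ)^b / (2:ℝ)^a) * X b ≤ y a := by
    intro a _ b _ hba
    have h1 : ((2:ℝ)^a - 1) * X b + T b - gmax M (vp S b) ≤ u a := by
      have hle : utility (vp S a) (E b) ≤ u a := by
        rw [hu]
        exact Finset.le_sup' _ (hEM b)
      rw [utility_vp] at hle
      rw [hEp b]
      exact hle
    have h2 := hUval b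
    have hmain : u b + ((2:ℝ)^a - 2^b) * X b ≤ u a := by nlinarith
    have goal2 : ((2:ℝ)^b / (2:ℝ)^a) * y b + (1 - (2:ℝ)^b / (2:ℝ)^a) * X b =
        (u b + ((2:ℝ)^a - 2^b) * X b) / 2^a := by
      rw [hy, eq_div_iff (hp2 a).ne']
      field_simp
    rw [goal2]
    simp only [hy]
    gcongr
  have haux := budget_aux G hG1 X y hy0 hX1 hXy hchain
  have hterm : ∀ ℓ ∈ G, ((2:ℝ)^ℓ)⁻¹ * gmax M (vp S ℓ) ≤ (X ℓ - y ℓ) + ((2:ℝ)^ℓ)⁻¹ := by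
    intro ℓ hℓ
    have h1 : gmax M (vp S ℓ) ≤ 2^ℓ * X ℓ + 1 - u ℓ := by
      have := hUval ℓ
      obtain ⟨hX1', hX0, hXT, hT1⟩ := hbounds ℓ
      nlinarith
    have key : (X ℓ - y ℓ) + ((2:ℝ)^ℓ)⁻¹ = (2^ℓ * X ℓ + 1 - u ℓ) / 2^ℓ := by
      rw [hy, eq_div_iff (hp2 ℓ).ne']
      field_simp
      ring
    rw [key]
    rw [inv_mul_eq_div, div_le_div_iff₀ (hp2 ℓ) (hp2 ℓ)]
    nlinarith [hp2 ℓ]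
  have hsplit : ∑ ℓ ∈ Finset.Icc 1 L, ((2:ℝ)^ℓ)⁻¹ * gp M (vp S ℓ) =
      ∑ ℓ ∈ G, ((2:ℝ)^ℓ)⁻¹ * gmax M (vp S ℓ) := by
    rw [← Finset.sum_filter_add_sum_filter_not (Finset.Icc 1 L)
      (fun ℓ => 0 ≤ gmax M (vp S ℓ)) (fun ℓ => ((2:ℝ)^ℓ)⁻¹ * gp M (vp S ℓ))]
    rw [← hG]
    have e1 : ∑ ℓ ∈ G, ((2:ℝ)^ℓ)⁻¹ * gp M (vp S ℓ) =
        ∑ ℓ ∈ G, ((2:ℝ)^ℓ)⁻¹ * gmax M (vp S ℓ) := by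
      apply Finset.sum_congr rfl
      intro ℓ hℓ
      rw [gp, max_eq_left (hGg ℓ hℓ)]
    have e2 : ∑ ℓ ∈ (Finset.Icc 1 L).filter (fun ℓ => ¬ 0 ≤ gmax M (vp S ℓ)),
        ((2:ℝ)^ℓ)⁻¹ * gp M (vp S ℓ) = 0 := by
      apply Finset.sum_eq_zero
      intro ℓ hℓ
      have := (Finset.mem_filter.1 hℓ).2
      rw [gp, max_eq_right (by linarith [not_le.1 this]), mul_zero]
    rw [e1, e2, add_zero]
  rw [hsplit]
  have hfinal : ∑ ℓ ∈ G, ((2:ℝ)^ℓ)⁻¹ * gmax M (vp S ℓ) ≤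
      (∑ ℓ ∈ G, (X ℓ - y ℓ)) + ∑ ℓ ∈ G, ((2:ℝ)^ℓ)⁻¹ := by
    rw [← Finset.sum_add_distrib]
    exact Finset.sum_le_sum hterm
  have hgeo := sum_inv_pow_two_le G hG1
  linarith

end Menus


section RevOpt
variable {m : ℕ}

/-- Any selection pays at most `gmax` at each valuation. -/
lemma sel_price_le (M : Finset (Entry m)) {s : (Fin m → ℝ) → Entry m}
    (hs : IsSelection M s) (v : Fin m → ℝ) : (s v).2 ≤ gmax M v := by
  apply le_gmax
  exact ⟨s v, (hs v).1, (hs v).2, rfl⟩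

/-- Revenue of any menu under a uniform discrete distribution is bounded by the average of
the maximal argmax prices. -/
lemma rev_le_gp_sum {N : ℕ} (pts : Fin N → (Fin m → ℝ)) (M : Finset (Entry m)) :
    Rev (unifD pts) M ≤ (N:ℝ)⁻¹ * ∑ w, gp M (pts w) := by
  apply Real.sSup_le
  · rintro r ⟨s, hsel, rfl⟩
    rw [revSel, integral_unifD]
    apply mul_le_mul_of_nonneg_left _ (by positivity)
    apply Finset.sum_le_sum
    intro w _
    exact (sel_price_le M hsel (pts w)).trans (le_max_left _ _)
  · apply mul_nonneg (by positivity)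
    exact Finset.sum_nonneg (fun w _ => gp_nonneg M (pts w))

/-- A selection rule exists for every menu. -/
lemma exists_selection (M : Finset (Entry m)) (hne : M.Nonempty) :
    ∃ s, IsSelection M s := by
  classical
  have h : ∀ v : Fin m → ℝ, ∃ e, e ∈ M ∧ ∀ e' ∈ M, utility v e' ≤ utility v e := by
    intro v
    obtain ⟨e, he, hmax⟩ := Finset.exists_max_image M (utility v) hne
    exact ⟨e, he, hmax⟩
  choose s hs1 hs2 using h
  exact ⟨s, fun v => ⟨hs1 v, hs2 v⟩⟩

/-- The uniform lottery over a finite set of items. -/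
noncomputable def unifLot (S : Finset (Fin m)) : Fin m → ℝ :=
  fun j => if j ∈ S then ((S.card : ℝ))⁻¹ else 0

lemma unifLot_sum (S : Finset (Fin m)) (T : Finset (Fin m)) :
    ∑ j ∈ T, unifLot S j = ((S.card : ℝ))⁻¹ * ((S ∩ T).card : ℝ) := by
  classical
  simp only [unifLot]
  rw [← Finset.sum_filter, Finset.filter_mem_eq_inter, Finset.inter_comm,
    Finset.sum_const, nsmul_eq_mul, mul_comm]

/-- The designed menu extracts half the in-set value from each support point. -/
lemma opt_lower {N : ℕ} (hN : 0 < N) (SS : Fin N → Finset (Fin m)) (s0 : ℕ) (hs0 : 1 ≤ s0)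
    (hcard : ∀ w, (SS w).card = s0)
    (hpair : ∀ w w', w ≠ w' → 2 * ((SS w ∩ SS w').card) ≤ s0)
    (lvf : Fin N → ℕ) (hlv1 : ∀ w, 1 ≤ lvf w) :
    (N:ℝ)⁻¹ * ∑ w, ((2:ℝ)^(lvf w)) / 2 ≤ OPT (unifD (fun w => vp (SS w) (lvf w))) := by
  classical
  set pts : Fin N → (Fin m → ℝ) := fun w => vp (SS w) (lvf w) with hpts
  set D := unifD pts with hD
  -- the tailored menu
  set own : Fin N → Entry m := fun w => (unifLot (SS w), ((2:ℝ)^(lvf w)) / 2) with hown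
  set M0 : Finset (Entry m) := insert ((0,0) : Entry m) (Finset.image own Finset.univ) with hM0
  have hcard_pos : ∀ w, (0:ℝ) < ((SS w).card : ℝ) := by
    intro w
    rw [hcard w]
    exact_mod_cast hs0
  have hM0menu : IsMenu m M0 := by
    constructor
    · exact Finset.mem_insert_self _ _
    · intro e he
      rcases Finset.mem_insert.1 he with h | h
      · rw [h]
        exact ⟨fun j => le_refl 0, by simp⟩
      · obtain ⟨w, -, rfl⟩ := Finset.mem_image.1 h
        constructor
        · intro j
          simp only [hown, unifLot]
          by_cases hj : j ∈ SS w
          · rw [if_pos hj]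
            positivity
          · rw [if_neg hj]
        · rw [hown]
          have := unifLot_sum (SS w) Finset.univ
          rw [Finset.inter_comm, Finset.univ_inter] at this
          simp only
          rw [this, inv_mul_cancel₀ (hcard_pos w).ne']
  -- utility computations
  have hXown : ∀ w, ∑ j ∈ SS w, (own w).1 j = 1 := by
    intro w
    rw [hown]
    simp only
    rw [unifLot_sum, Finset.inter_self, inv_mul_cancel₀ (hcard_pos w).ne']
  have hTown : ∀ w, ∑ j, (own w).1 j = 1 := by
    intro w
    rw [hown]
    simp only
    have := unifLot_sum (SS w) Finset.univ
    rw [Finset.inter_comm, Finset.univ_inter] at this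
    rw [this, inv_mul_cancel₀ (hcard_pos w).ne']
  have hUown : ∀ w, utility (pts w) (own w) = ((2:ℝ)^(lvf w)) / 2 := by
    intro w
    rw [hpts, utility_vp, hXown w, hTown w, hown]
    simp only
    ring
  -- IC : own entry maximizes utility at its own point
  have hIC : ∀ w, ∀ e ∈ M0, utility (pts w) e ≤ utility (pts w) (own w) := by
    intro w e he
    rw [hUown w]
    rcases Finset.mem_insert.1 he with h | h
    · rw [h, utility_zero]
      positivity
    · obtain ⟨w', -, rfl⟩ := Finset.mem_image.1 h
      by_cases hww : w' = w
      · rw [hww, hUown w]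
      · -- cross entry
        have hinter : 2 * ((SS w ∩ SS w').card) ≤ s0 := hpair w w' (fun hc => hww hc.symm)
        have hXcross : ∑ j ∈ SS w, (own w').1 j =
            ((s0:ℝ))⁻¹ * (((SS w' ∩ SS w).card : ℝ)) := by
          rw [hown]
          simp only
          rw [unifLot_sum, hcard w']
        rw [hpts, utility_vp, hXcross, hTown w']
        rw [hown]
        simp only
        have h2l : (1:ℝ) ≤ (2:ℝ)^(lvf w) := one_le_pow₀ (by norm_num)
        have h2l' : (2:ℝ) ≤ (2:ℝ)^(lvf w') := by
          calc (2:ℝ) = 2^1 := (pow_one 2).symm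
          _ ≤ 2^(lvf w') := by
            apply pow_le_pow_right₀ (by norm_num) (hlv1 w')
        have hs0R : (0:ℝ) < (s0:ℝ) := by exact_mod_cast hs0
        have hfrac : ((s0:ℝ))⁻¹ * (((SS w' ∩ SS w).card : ℝ)) ≤ 1/2 := by
          rw [Finset.inter_comm]
          have : (2:ℝ) * ((SS w ∩ SS w').card : ℝ) ≤ (s0:ℝ) := by exact_mod_cast hinter
          rw [inv_mul_le_iff₀ hs0R]
          nlinarith
        have hfrac0 : (0:ℝ) ≤ ((s0:ℝ))⁻¹ * (((SS w' ∩ SS w).card : ℝ)) := by positivity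
        nlinarith
  -- injectivity of the support points
  have hinj : ∀ w w', pts w = pts w' → w = w' := by
    intro w w' heq
    by_contra hww
    have hSS : SS w = SS w' := by
      ext j
      have hj : vp (SS w) (lvf w) j = vp (SS w') (lvf w') j := congrFun heq j
      simp only [vp] at hj
      have h2a : (1:ℝ) < (2:ℝ)^(lvf w) := by
        calc (1:ℝ) < 2 := by norm_num
        _ = 2^1 := (pow_one 2).symm
        _ ≤ 2^(lvf w) := by apply pow_le_pow_right₀ (by norm_num) (hlv1 w)
      have h2b : (1:ℝ) < (2:ℝ)^(lvf w') := by
        calc (1:ℝ) < 2 := by norm_num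
        _ = 2^1 := (pow_one 2).symm
        _ ≤ 2^(lvf w') := by apply pow_le_pow_right₀ (by norm_num) (hlv1 w')
      constructor
      · intro hjw
        by_contra hjw'
        rw [if_pos hjw, if_neg hjw'] at hj
        linarith
      · intro hjw'
        by_contra hjw
        rw [if_neg hjw, if_pos hjw'] at hj
        linarith
    have := hpair w w' hww
    rw [hSS, Finset.inter_self, hcard w'] at this
    omega
  -- the tailored selection
  have hM0ne : M0.Nonempty := ⟨(0,0), hM0menu.1⟩
  obtain ⟨sdef, hsdef⟩ := exists_selection M0 hM0ne
  set ssel : (Fin m → ℝ) → Entry m := fun v =>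
    if h : ∃ w, v = pts w then own (Classical.choose h) else sdef v with hssel
  have hsselIsSel : IsSelection M0 ssel := by
    intro v
    by_cases h : ∃ w, v = pts w
    · have heq : ssel v = own h.choose := by
        rw [hssel]
        exact dif_pos h
      rw [heq]
      constructor
      · exact Finset.mem_insert.2 (Or.inr (Finset.mem_image.2 ⟨_, Finset.mem_univ _, rfl⟩))
      · intro e he
        have hv := h.choose_spec
        calc utility v e = utility (pts h.choose) e := by rw [← hv]
          _ ≤ utility (pts h.choose) (own h.choose) := hIC _ e he
          _ = utility v (own h.choose) := by rw [← hv]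
    · have heq : ssel v = sdef v := by
        rw [hssel]
        exact dif_neg h
      rw [heq]
      exact hsdef v
  have hsselval : ∀ w, (ssel (pts w)).2 = ((2:ℝ)^(lvf w)) / 2 := by
    intro w
    have h : ∃ w', pts w = pts w' := ⟨w, rfl⟩
    have heq : ssel (pts w) = own h.choose := by
      rw [hssel]
      exact dif_pos h
    have hcw : h.choose = w := (hinj w h.choose h.choose_spec).symm
    rw [heq, hcw]
  -- global bound for bddAbove of the Rev and OPT sets
  set B : ℝ := (N:ℝ)⁻¹ * ∑ w, (2:ℝ)^(lvf w) with hB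
  have hrev_le : ∀ M : Finset (Entry m), IsMenu m M → Rev D M ≤ B := by
    intro M hM
    refine (rev_le_gp_sum pts M).trans ?_
    rw [hB]
    apply mul_le_mul_of_nonneg_left _ (by positivity)
    apply Finset.sum_le_sum
    intro w _
    exact gp_le M hM ⟨(0,0), hM.1⟩ (SS w) (lvf w)
  -- Y ≤ revSel ssel = Rev D M0 ≤ OPT
  have hYrev : revSel D ssel = (N:ℝ)⁻¹ * ∑ w, ((2:ℝ)^(lvf w)) / 2 := by
    rw [revSel, hD, integral_unifD]
    congr 1
    exact Finset.sum_congr rfl (fun w _ => hsselval w)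
  have hRevD : revSel D ssel ≤ Rev D M0 := by
    apply le_csSup
    · refine ⟨B, ?_⟩
      rintro r ⟨s, hsel, rfl⟩
      rw [revSel, hD, integral_unifD]
      rw [hB]
      apply mul_le_mul_of_nonneg_left _ (by positivity)
      apply Finset.sum_le_sum
      intro w _
      calc (s (pts w)).2 ≤ gmax M0 (pts w) := sel_price_le M0 hsel (pts w)
        _ ≤ gp M0 (pts w) := le_max_left _ _
        _ ≤ (2:ℝ)^(lvf w) := gp_le M0 hM0menu hM0ne (SS w) (lvf w)
    · exact ⟨ssel, hsselIsSel, rfl⟩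
  have hOPT : Rev D M0 ≤ OPT D := by
    apply le_csSup
    · refine ⟨B, ?_⟩
      rintro r ⟨M, hM, rfl⟩
      exact hrev_le M hM
    · exact ⟨M0, hM0menu, rfl⟩
  rw [← hYrev]
  exact hRevD.trans hOPT

end RevOpt


lemma fin_sum_icc {L : ℕ} (f : ℕ → ℝ) :
    ∑ i : Fin L, f ((i:ℕ)+1) = ∑ ℓ ∈ Finset.Icc 1 L, f ℓ := by
  rw [Fin.sum_univ_eq_sum_range (fun j => f (j+1)) L]
  induction L with
  | zero => simp
  | succ n ih => rw [Finset.sum_range_succ, ih, Finset.sum_Icc_succ_top (by omega)]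

/-- **Sample-complexity lower bound.** There is a universal constant `c > 0` such that for
all `m, t ≥ 1` and integer `2 ≤ H < 2^(m/400)` with `t·m·⌈log₂ H⌉ ≤ 2^(m/400)`, every
deterministic algorithm `A` mapping `t`-tuples of sampled valuations to menus has, for some
distribution `D` on `{1, …, H}^m`, expected revenue (over the i.i.d. sample from `D`) at
most `c · OPT(D) / log₂ H`. -/
theorem sample_complexity_lower_bound :
    ∃ c : ℝ, 0 < c ∧
      ∀ (m t H : ℕ), 1 ≤ m → 1 ≤ t → 2 ≤ H →
        (H : ℝ) < 2 ^ ((m : ℝ) / 400) →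
        ((t * m * ⌈Real.logb 2 (H : ℝ)⌉₊ : ℕ) : ℝ) ≤ 2 ^ ((m : ℝ) / 400) →
        ∀ A : (Fin t → (Fin m → ℝ)) → Finset (Entry m), (∀ vs, IsMenu m (A vs)) →
          ∃ D : Measure (Fin m → ℝ), IsProbabilityMeasure D ∧
            D {v | ∀ j, ∃ k : ℕ, 1 ≤ k ∧ k ≤ H ∧ v j = (k : ℝ)} = 1 ∧
            (∫ vs, Rev D (A vs) ∂(Measure.pi fun _ : Fin t => D)) ≤
              c * OPT D / Real.logb 2 (H : ℝ) := by
  classical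
  refine ⟨1000, by norm_num, ?_⟩
  intro m t H hm ht hH hHlt hsample A hA
  -- ### basic numerology
  set L := Nat.log 2 H with hLdef
  have hL1 : 1 ≤ L := (Nat.le_log_iff_pow_le (by norm_num) (by omega)).2 (by simpa using hH)
  have h2L : 2^L ≤ H := Nat.pow_log_le_self 2 (by omega)
  have hH2L : H < 2^(L+1) := Nat.lt_pow_succ_log_self (by norm_num) H
  have hm400 : 400 < m := by
    have h2 : (2:ℝ) ≤ (H:ℝ) := by exact_mod_cast hH
    have hlt : (2:ℝ) < 2 ^ ((m:ℝ)/400) := lt_of_le_of_lt h2 hHlt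
    have h1m : (1:ℝ) < (m:ℝ)/400 := by
      have hiff := Real.rpow_lt_rpow_left_iff (x := 2) (y := (1:ℝ)) (z := (m:ℝ)/400)
        (by norm_num)
      apply hiff.1
      rwa [Real.rpow_one]
    have : (400:ℝ) < (m:ℝ) := by
      rw [lt_div_iff₀ (by norm_num : (0:ℝ) < 400)] at h1m
      linarith
    exact_mod_cast this
  set b := m / 400 + 1 with hbdef
  have hmb : (m:ℝ)/400 ≤ ((b:ℕ):ℝ) := by
    have h1 : m < 400 * b := by
      have h2 := Nat.div_add_mod m 400
      have h3 : m % 400 < 400 := Nat.mod_lt _ (by norm_num)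
      omega
    rw [div_le_iff₀ (by norm_num : (0:ℝ) < 400)]
    calc (m:ℝ) ≤ ((400*b : ℕ):ℝ) := by exact_mod_cast h1.le
      _ = ((b:ℕ):ℝ) * 400 := by push_cast; ring
  have hpow_b : (2:ℝ) ^ ((m:ℝ)/400) ≤ ((2^b : ℕ):ℝ) := by
    calc (2:ℝ) ^ ((m:ℝ)/400) ≤ (2:ℝ) ^ (((b:ℕ)):ℝ) :=
        Real.rpow_le_rpow_of_exponent_le (by norm_num) hmb
      _ = ((2^b : ℕ):ℝ) := by
        rw [Real.rpow_natCast]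
        push_cast
        ring
  have hHb : H ≤ 2^b := by
    have : (H:ℝ) ≤ ((2^b:ℕ):ℝ) := (le_of_lt hHlt).trans hpow_b
    exact_mod_cast this
  have hce1 : 1 ≤ ⌈Real.logb 2 (H:ℝ)⌉₊ := by
    apply Nat.one_le_ceil_iff.2
    apply Real.logb_pos (by norm_num)
    exact_mod_cast (by omega : 1 < H)
  have htb : t ≤ 2^b := by
    have h0 : t ≤ t*m*⌈Real.logb 2 (H:ℝ)⌉₊ := by
      calc t = t*1*1 := by ring
        _ ≤ t*m*⌈Real.logb 2 (H:ℝ)⌉₊ := Nat.mul_le_mul (Nat.mul_le_mul_left _ hm) hce1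
    have h1 : (t:ℝ) ≤ ((2^b:ℕ):ℝ) := by
      calc (t:ℝ) ≤ ((t*m*⌈Real.logb 2 (H:ℝ)⌉₊ : ℕ):ℝ) := by exact_mod_cast h0
        _ ≤ 2 ^ ((m:ℝ)/400) := hsample
        _ ≤ ((2^b:ℕ):ℝ) := hpow_b
    exact_mod_cast h1
  set N := 2^(2*b+1) with hNdef
  have hNpos : 0 < N := Nat.pow_pos (by norm_num)
  have htHN : t * H ≤ N := by
    calc t*H ≤ 2^b * 2^b := Nat.mul_le_mul htb hHb
      _ = 2^(2*b) := by rw [← pow_add]; ring_nf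
      _ ≤ 2^(2*b+1) := Nat.pow_le_pow_right (by norm_num) (by omega)
  set s0 := (m+15)/16 with hs0def
  have hs0m : s0 ≤ m := by omega
  set k0 := s0/2 + 1 with hk0def
  have hk0s : k0 ≤ s0 := by omega
  -- ### the counting inequality for the family
  have hcount : N * (Nat.choose s0 k0 * Nat.choose m (s0 - k0)) < Nat.choose m s0 := by
    have hstep : ∀ i, s0 - k0 ≤ i → i < s0 → 14 * Nat.choose m i ≤ Nat.choose m (i+1) := by
      intro i hi1 hi2
      have hid : Nat.choose m (i+1) * (i+1) = Nat.choose m i * (m - i) :=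
        Nat.choose_succ_right_eq m i
      have hmi : 14 * (i+1) ≤ m - i := by omega
      have h1 : 14 * Nat.choose m i * (i+1) ≤ Nat.choose m i * (m - i) := by
        calc 14 * Nat.choose m i * (i+1) = Nat.choose m i * (14*(i+1)) := by ring
          _ ≤ Nat.choose m i * (m - i) := Nat.mul_le_mul_left _ hmi
      have h2 : 14 * Nat.choose m i * (i+1) ≤ Nat.choose m (i+1) * (i+1) := by
        rw [hid]; exact h1
      exact Nat.le_of_mul_le_mul_right h2 (by omega)
    have hiter : ∀ j, j ≤ k0 → Nat.choose m (s0 - k0) * 14^j ≤ Nat.choose m (s0 - k0 + j) := by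
      intro j
      induction j with
      | zero => intro _; simp
      | succ i ih =>
        intro hik
        have h1 := ih (by omega)
        calc Nat.choose m (s0-k0) * 14^(i+1) = 14 * (Nat.choose m (s0-k0) * 14^i) := by ring
          _ ≤ 14 * Nat.choose m (s0-k0+i) := Nat.mul_le_mul_left _ h1
          _ ≤ Nat.choose m (s0-k0+i+1) := hstep _ (by omega) (by omega)
          _ = Nat.choose m (s0-k0+(i+1)) := by ring_nf
    have hCs : Nat.choose m (s0-k0) * 14^k0 ≤ Nat.choose m s0 := by
      have := hiter k0 le_rfl
      rwa [Nat.sub_add_cancel hk0s] at this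
    have hCsk : Nat.choose s0 k0 ≤ 2^s0 := by
      calc Nat.choose s0 k0 ≤ ∑ i ∈ Finset.range (s0+1), Nat.choose s0 i :=
          Finset.single_le_sum (fun i _ => Nat.zero_le _) (Finset.mem_range.2 (by omega))
        _ = 2^s0 := Nat.sum_range_choose s0
    have hN14 : N * 2^s0 < 14^k0 := by
      have e1 : (N * 2^s0)^2 = 2^(4*b+2+2*s0) := by
        rw [hNdef, mul_pow, ← pow_mul, ← pow_mul, ← pow_add]
        congr 1
        ring
      have e2 : (2:ℕ)^(4*b+2+2*s0) < 2^(3*s0) :=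
        Nat.pow_lt_pow_right (by norm_num) (by omega)
      have e3 : (2:ℕ)^(3*s0) ≤ 14^s0 := by
        calc (2:ℕ)^(3*s0) = (2^3)^s0 := by rw [pow_mul]
          _ ≤ 14^s0 := Nat.pow_le_pow_left (by norm_num) _
      have e4 : (14:ℕ)^s0 ≤ (14^k0)^2 := by
        rw [← pow_mul]
        exact Nat.pow_le_pow_right (by norm_num) (by omega)
      have hsq : (N * 2^s0)^2 < (14^k0)^2 := by
        rw [e1]
        exact lt_of_lt_of_le e2 (e3.trans e4)
      exact lt_of_pow_lt_pow_left₀ 2 (Nat.zero_le _) hsq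
    calc N * (Nat.choose s0 k0 * Nat.choose m (s0-k0))
        ≤ N * (2^s0 * Nat.choose m (s0-k0)) :=
          Nat.mul_le_mul_left _ (Nat.mul_le_mul_right _ hCsk)
      _ = (N * 2^s0) * Nat.choose m (s0-k0) := by ring
      _ < 14^k0 * Nat.choose m (s0-k0) :=
          mul_lt_mul_of_pos_right hN14 (Nat.choose_pos (by omega))
      _ = Nat.choose m (s0-k0) * 14^k0 := by ring
      _ ≤ Nat.choose m s0 := hCs
  obtain ⟨SS, hSScard, hSSpair⟩ := family_exists m s0 N (by omega) hcount
  -- ### levels and the prior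
  have hLpos : 0 < L := hL1
  haveI : Nonempty (Fin L) := ⟨⟨0, hLpos⟩⟩
  set lv : Fin L → ℕ := fun i => (i:ℕ) + 1 with hlv
  set z := ∑ i : Fin L, ((2:ℝ)^(lv i))⁻¹ with hz
  have hzpos : 0 < z := Finset.sum_pos (fun i _ => by positivity) Finset.univ_nonempty
  have hz1 : z ≤ 1 := by
    rw [hz]
    rw [show (∑ i : Fin L, ((2:ℝ)^(lv i))⁻¹) = ∑ ℓ ∈ Finset.Icc 1 L, ((2:ℝ)^ℓ)⁻¹ from
      fin_sum_icc (fun ℓ => ((2:ℝ)^ℓ)⁻¹)]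
    exact sum_inv_pow_two_le _ (fun ℓ h => (Finset.mem_Icc.1 h).1)
  have hzhalf : 2⁻¹ ≤ z := by
    have h1 : ((2:ℝ)^(lv (⟨0, hLpos⟩ : Fin L)))⁻¹ ≤ z := by
      rw [hz]
      exact Finset.single_le_sum (f := fun i : Fin L => ((2:ℝ)^(lv i))⁻¹)
        (fun i _ => by positivity) (Finset.mem_univ _)
    have h2 : ((2:ℝ)^(lv (⟨0, hLpos⟩ : Fin L)))⁻¹ = 2⁻¹ := by
      norm_num [hlv]
    rwa [h2] at h1
  set q : Fin L → ℝ := fun i => ((2:ℝ)^(lv i))⁻¹ / z with hq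
  have hq0 : ∀ i, 0 ≤ q i := fun i => by rw [hq]; positivity
  have hqpos : ∀ i, 0 < q i := fun i => by rw [hq]; positivity
  have hq1 : ∑ i, q i = 1 := by
    rw [hq, ← Finset.sum_div, ← hz, div_self hzpos.ne']
  -- ### the random distributions
  set ptf : (Fin N → Fin L) → Fin N → (Fin m → ℝ) := fun σ w => vp (SS w) (lv (σ w)) with hptf
  set DD : (Fin N → Fin L) → Measure (Fin m → ℝ) := fun σ => unifD (ptf σ) with hDD
  set P : (Fin N → Fin L) → ℝ := fun σ => ∏ w, q (σ w) with hP
  have hP0 : ∀ σ, 0 ≤ P σ := fun σ => Finset.prod_nonneg (fun w _ => hq0 _)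
  have hPpos : ∀ σ, 0 < P σ := fun σ => Finset.prod_pos (fun w _ => hqpos _)
  have hP1 : ∑ σ : Fin N → Fin L, P σ = 1 := by
    rw [hP]
    have := Finset.prod_univ_sum (fun _ : Fin N => (Finset.univ : Finset (Fin L)))
      (fun _ i => q i)
    rw [Fintype.piFinset_univ] at this
    simp only [← this, hq1, Finset.prod_const_one]
  set tupf : (Fin N → Fin L) → (Fin t → Fin N) → (Fin t → (Fin m → ℝ)) :=
    fun σ ω => fun i => ptf σ (ω i) with htupf
  set Xv : (Fin N → Fin L) → ℝ := fun σ =>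
    ∫ vs, Rev (DD σ) (A vs) ∂(Measure.pi fun _ : Fin t => DD σ) with hXv
  set Yv : (Fin N → Fin L) → ℝ := fun σ => (N:ℝ)⁻¹ * ∑ w, ((2:ℝ)^(lv (σ w))) / 2 with hYv
  -- ### per-menu bounds
  have hHreal : ((2:ℝ))^L ≤ (H:ℝ) := by
    have h := Nat.cast_le (α := ℝ) |>.2 h2L
    push_cast at h
    exact h
  have hgp_le_H : ∀ (M : Finset (Entry m)), IsMenu m M → ∀ (w : Fin N) (i : Fin L),
      gp M (vp (SS w) (lv i)) ≤ (H:ℝ) := by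
    intro M hM w i
    refine (gp_le M hM ⟨(0,0), hM.1⟩ (SS w) (lv i)).trans ?_
    have h1 : (2:ℝ)^(lv i) ≤ (2:ℝ)^L := by
      apply pow_le_pow_right₀ (by norm_num : (1:ℝ) ≤ 2)
      have h2 := i.isLt
      simp only [hlv]
      omega
    linarith [hHreal]
  have hmenu8 : ∀ (M : Finset (Entry m)), IsMenu m M → ∀ (w : Fin N),
      ∑ i : Fin L, q i * gp M (vp (SS w) (lv i)) ≤ 8 := by
    intro M hM w
    have hsum : ∑ i : Fin L, q i * gp M (vp (SS w) (lv i)) =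
        z⁻¹ * ∑ i : Fin L, ((2:ℝ)^(lv i))⁻¹ * gp M (vp (SS w) (lv i)) := by
      rw [Finset.mul_sum]
      apply Finset.sum_congr rfl
      intro i _
      rw [hq]
      ring
    rw [hsum]
    have hre : ∑ i : Fin L, ((2:ℝ)^(lv i))⁻¹ * gp M (vp (SS w) (lv i)) =
        ∑ ℓ ∈ Finset.Icc 1 L, ((2:ℝ)^ℓ)⁻¹ * gp M (vp (SS w) ℓ) :=
      fin_sum_icc (fun ℓ => ((2:ℝ)^ℓ)⁻¹ * gp M (vp (SS w) ℓ))
    have h4 := menu_budget M hM (SS w) L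
    rw [← hre] at h4
    have hzinv : z⁻¹ ≤ 2 := by
      have h := inv_anti₀ (by norm_num : (0:ℝ) < 2⁻¹) hzhalf
      rwa [inv_inv] at h
    have hnn : 0 ≤ ∑ i : Fin L, ((2:ℝ)^(lv i))⁻¹ * gp M (vp (SS w) (lv i)) := by
      apply Finset.sum_nonneg
      intro i _
      exact mul_nonneg (by positivity) (gp_nonneg _ _)
    calc z⁻¹ * ∑ i : Fin L, ((2:ℝ)^(lv i))⁻¹ * gp M (vp (SS w) (lv i))
        ≤ 2 * ∑ i : Fin L, ((2:ℝ)^(lv i))⁻¹ * gp M (vp (SS w) (lv i)) :=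
          mul_le_mul_of_nonneg_right hzinv hnn
      _ ≤ 2 * 4 := by linarith
      _ = 8 := by norm_num
  -- ### expected revenue of the algorithm is at most 9
  have hEX : ∑ σ : Fin N → Fin L, P σ * Xv σ ≤ 9 := by
    have hXv_eq : ∀ σ, Xv σ =
        ((N:ℝ)^t)⁻¹ * ∑ ω : Fin t → Fin N, Rev (DD σ) (A (tupf σ ω)) := by
      intro σ
      rw [hXv]
      exact integral_pi_unifD hNpos (ptf σ) (fun vs => Rev (unifD (ptf σ)) (A vs))
    have h1 : ∀ σ, Xv σ ≤
        ((N:ℝ)^t)⁻¹ * ∑ ω : Fin t → Fin N,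
          ((N:ℝ)⁻¹ * ∑ w, gp (A (tupf σ ω)) (ptf σ w)) := by
      intro σ
      rw [hXv_eq σ]
      apply mul_le_mul_of_nonneg_left _ (by positivity)
      apply Finset.sum_le_sum
      intro ω _
      exact rev_le_gp_sum (ptf σ) (A (tupf σ ω))
    have h3 : ∀ (ω : Fin t → Fin N) (w : Fin N), w ∉ Finset.image ω Finset.univ →
        ∑ σ : Fin N → Fin L, P σ * gp (A (tupf σ ω)) (ptf σ w) ≤ 8 := by
      intro ω w hw
      apply cond_bound hLpos q hq0 hq1 w
        (fun σ i => gp (A (tupf σ ω)) (vp (SS w) (lv i)))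
      · intro σ σ' hagree i
        have htt : tupf σ ω = tupf σ' ω := by
          funext i'
          rw [htupf]
          simp only [hptf]
          rw [hagree (ω i') (fun hc => hw (Finset.mem_image.2 ⟨i', Finset.mem_univ _, hc⟩))]
        rw [htt]
      · intro σ
        exact hmenu8 _ (hA _) w
    have h4 : ∀ (ω : Fin t → Fin N) (w : Fin N),
        ∑ σ : Fin N → Fin L, P σ * gp (A (tupf σ ω)) (ptf σ w) ≤ (H:ℝ) := by
      intro ω w
      calc ∑ σ : Fin N → Fin L, P σ * gp (A (tupf σ ω)) (ptf σ w)
          ≤ ∑ σ : Fin N → Fin L, P σ * (H:ℝ) := by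
            apply Finset.sum_le_sum
            intro σ _
            exact mul_le_mul_of_nonneg_left (hgp_le_H _ (hA _) w (σ w)) (hP0 σ)
        _ = (H:ℝ) := by rw [← Finset.sum_mul, hP1, one_mul]
    have h5 : ∀ (ω : Fin t → Fin N),
        ∑ w, (∑ σ : Fin N → Fin L, P σ * gp (A (tupf σ ω)) (ptf σ w))
          ≤ (t:ℝ)*(H:ℝ) + (N:ℝ)*8 := by
      intro ω
      rw [← Finset.sum_filter_add_sum_filter_not Finset.univ
        (fun w => w ∈ Finset.image ω Finset.univ)]
      have hA1 : ∑ w ∈ Finset.univ.filter (fun w => w ∈ Finset.image ω Finset.univ),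
          (∑ σ : Fin N → Fin L, P σ * gp (A (tupf σ ω)) (ptf σ w)) ≤ (t:ℝ)*(H:ℝ) := by
        calc ∑ w ∈ Finset.univ.filter (fun w => w ∈ Finset.image ω Finset.univ),
            (∑ σ : Fin N → Fin L, P σ * gp (A (tupf σ ω)) (ptf σ w))
            ≤ ∑ _w ∈ Finset.univ.filter (fun w => w ∈ Finset.image ω Finset.univ), (H:ℝ) :=
              Finset.sum_le_sum (fun w _ => h4 ω w)
          _ = ((Finset.univ.filter (fun w => w ∈ Finset.image ω Finset.univ)).card : ℝ) * H := by
              rw [Finset.sum_const, nsmul_eq_mul]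
          _ ≤ (t:ℝ)*(H:ℝ) := by
              apply mul_le_mul_of_nonneg_right _ (by positivity)
              have hcard : (Finset.univ.filter
                  (fun w => w ∈ Finset.image ω Finset.univ)).card ≤ t := by
                calc (Finset.univ.filter (fun w => w ∈ Finset.image ω Finset.univ)).card
                    ≤ (Finset.image ω Finset.univ).card := by
                      apply Finset.card_le_card
                      intro x hx
                      exact (Finset.mem_filter.1 hx).2
                  _ ≤ (Finset.univ : Finset (Fin t)).card := Finset.card_image_le
                  _ = t := by simp
              exact_mod_cast hcard
      have hA2 : ∑ w ∈ Finset.univ.filter (fun w => ¬ w ∈ Finset.image ω Finset.univ),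
          (∑ σ : Fin N → Fin L, P σ * gp (A (tupf σ ω)) (ptf σ w)) ≤ (N:ℝ)*8 := by
        calc ∑ w ∈ Finset.univ.filter (fun w => ¬ w ∈ Finset.image ω Finset.univ),
            (∑ σ : Fin N → Fin L, P σ * gp (A (tupf σ ω)) (ptf σ w))
            ≤ ∑ _w ∈ Finset.univ.filter (fun w => ¬ w ∈ Finset.image ω Finset.univ), (8:ℝ) :=
              Finset.sum_le_sum (fun w hw => h3 ω w (Finset.mem_filter.1 hw).2)
          _ = ((Finset.univ.filter (fun w => ¬ w ∈ Finset.image ω Finset.univ)).card : ℝ) * 8 := by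
              rw [Finset.sum_const, nsmul_eq_mul]
          _ ≤ (N:ℝ)*8 := by
              apply mul_le_mul_of_nonneg_right _ (by norm_num)
              have : (Finset.univ.filter
                  (fun w => ¬ w ∈ Finset.image ω Finset.univ)).card ≤ N := by
                calc (Finset.univ.filter (fun w => ¬ w ∈ Finset.image ω Finset.univ)).card
                    ≤ (Finset.univ : Finset (Fin N)).card := Finset.card_le_card
                      (Finset.filter_subset _ _)
                  _ = N := by simp
              exact_mod_cast this
      linarith
    -- combine
    have hswap : ∑ σ : Fin N → Fin L, P σ * (((N:ℝ)^t)⁻¹ *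
          ∑ ω : Fin t → Fin N, ((N:ℝ)⁻¹ * ∑ w, gp (A (tupf σ ω)) (ptf σ w)))
        = ((N:ℝ)^t)⁻¹ * ∑ ω : Fin t → Fin N,
            ((N:ℝ)⁻¹ * ∑ w, ∑ σ : Fin N → Fin L, P σ * gp (A (tupf σ ω)) (ptf σ w)) := by
      simp only [Finset.mul_sum]
      rw [Finset.sum_comm]
      apply Finset.sum_congr rfl
      intro ω _
      rw [Finset.sum_comm]
      apply Finset.sum_congr rfl
      intro w _
      apply Finset.sum_congr rfl
      intro σ _
      ring
    have hfinal : ((N:ℝ)^t)⁻¹ * ∑ ω : Fin t → Fin N,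
        ((N:ℝ)⁻¹ * ∑ w, ∑ σ : Fin N → Fin L, P σ * gp (A (tupf σ ω)) (ptf σ w)) ≤ 9 := by
      have hNR : (0:ℝ) < (N:ℝ) := by exact_mod_cast hNpos
      have hinner : ∀ ω : Fin t → Fin N,
          (N:ℝ)⁻¹ * ∑ w, ∑ σ : Fin N → Fin L, P σ * gp (A (tupf σ ω)) (ptf σ w) ≤ 9 := by
        intro ω
        calc (N:ℝ)⁻¹ * ∑ w, ∑ σ : Fin N → Fin L, P σ * gp (A (tupf σ ω)) (ptf σ w)
            ≤ (N:ℝ)⁻¹ * ((t:ℝ)*(H:ℝ) + (N:ℝ)*8) := by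
              apply mul_le_mul_of_nonneg_left (h5 ω) (by positivity)
          _ = (N:ℝ)⁻¹ * ((t:ℝ)*(H:ℝ)) + 8 := by
              rw [mul_add]
              congr 1
              rw [← mul_assoc, inv_mul_cancel₀ hNR.ne', one_mul]
          _ ≤ 1 + 8 := by
              have h6 : (t:ℝ)*(H:ℝ) ≤ (N:ℝ) := by
                calc (t:ℝ)*(H:ℝ) = ((t*H:ℕ):ℝ) := by push_cast; ring
                  _ ≤ (N:ℝ) := by exact_mod_cast htHN
              have : (N:ℝ)⁻¹ * ((t:ℝ)*(H:ℝ)) ≤ (N:ℝ)⁻¹ * (N:ℝ) :=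
                mul_le_mul_of_nonneg_left h6 (by positivity)
              rw [inv_mul_cancel₀ hNR.ne'] at this
              linarith
          _ = 9 := by norm_num
      calc ((N:ℝ)^t)⁻¹ * ∑ ω : Fin t → Fin N,
            ((N:ℝ)⁻¹ * ∑ w, ∑ σ : Fin N → Fin L, P σ * gp (A (tupf σ ω)) (ptf σ w))
          ≤ ((N:ℝ)^t)⁻¹ * ∑ _ω : Fin t → Fin N, (9:ℝ) := by
            apply mul_le_mul_of_nonneg_left _ (by positivity)
            exact Finset.sum_le_sum (fun ω _ => hinner ω)
        _ = 9 := by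
            rw [Finset.sum_const, nsmul_eq_mul, Finset.card_univ]
            rw [Fintype.card_fun]
            simp only [Fintype.card_fin]
            rw [← mul_assoc]
            rw [show (((N^t : ℕ)):ℝ) = ((N:ℝ)^t) from by push_cast; ring]
            rw [inv_mul_cancel₀ (by positivity), one_mul]
    calc ∑ σ : Fin N → Fin L, P σ * Xv σ
        ≤ ∑ σ : Fin N → Fin L, P σ * (((N:ℝ)^t)⁻¹ *
            ∑ ω : Fin t → Fin N, ((N:ℝ)⁻¹ * ∑ w, gp (A (tupf σ ω)) (ptf σ w))) :=
          Finset.sum_le_sum (fun σ _ => mul_le_mul_of_nonneg_left (h1 σ) (hP0 σ))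
      _ = ((N:ℝ)^t)⁻¹ * ∑ ω : Fin t → Fin N,
            ((N:ℝ)⁻¹ * ∑ w, ∑ σ : Fin N → Fin L, P σ * gp (A (tupf σ ω)) (ptf σ w)) := hswap
      _ ≤ 9 := hfinal
  -- ### expected value of the designed revenue
  have hmargY : ∀ w : Fin N,
      ∑ σ : Fin N → Fin L, P σ * ((2:ℝ)^(lv (σ w)) / 2) = (L:ℝ)/(2*z) := by
    intro w
    have hid := marginal_eq hLpos q hq1 w (fun _ i => (2:ℝ)^(lv i) / 2)
      (fun σ σ' _ i => rfl)
    rw [hP]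
    rw [hid]
    have hconst : ∑ i : Fin L, q i * ((2:ℝ)^(lv i) / 2) = (L:ℝ)/(2*z) := by
      have heach : ∀ i : Fin L, q i * ((2:ℝ)^(lv i) / 2) = (2*z)⁻¹ := by
        intro i
        have h2 : ((2:ℝ)^(lv i)) ≠ 0 := by positivity
        have hstep : ((2:ℝ)^(lv i))⁻¹ / z * ((2:ℝ)^(lv i) / 2) =
            (((2:ℝ)^(lv i))⁻¹ * (2:ℝ)^(lv i)) * (z⁻¹ * 2⁻¹) := by
          rw [div_eq_mul_inv, div_eq_mul_inv]
          ring
        simp only [hq]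
        rw [hstep, inv_mul_cancel₀ h2, one_mul, mul_inv]
        ring
      rw [Finset.sum_congr rfl (fun i _ => heach i), Finset.sum_const, nsmul_eq_mul,
        Finset.card_univ, Fintype.card_fin]
      rw [div_eq_mul_inv]
    rw [Finset.sum_congr rfl (fun σ _ => by rw [hconst]), ← Finset.sum_mul]
    rw [show (∑ σ : Fin N → Fin L, ∏ j, q (σ j)) = 1 from hP1, one_mul]
  have hEY : ∑ σ : Fin N → Fin L, P σ * Yv σ = (L:ℝ)/(2*z) := by
    have h1 : ∀ σ, P σ * Yv σ = (N:ℝ)⁻¹ * ∑ w, P σ * ((2:ℝ)^(lv (σ w)) / 2) := by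
      intro σ
      simp only [hYv, Finset.mul_sum]
      apply Finset.sum_congr rfl
      intro w _
      ring
    rw [Finset.sum_congr rfl (fun σ _ => h1 σ), ← Finset.mul_sum, Finset.sum_comm]
    rw [Finset.sum_congr rfl (fun w (_ : w ∈ Finset.univ) => hmargY w)]
    rw [Finset.sum_const, nsmul_eq_mul, Finset.card_univ, Fintype.card_fin, ← mul_assoc,
      inv_mul_cancel₀ (by exact_mod_cast hNpos.ne' : (N:ℝ) ≠ 0), one_mul]
  -- ### choose a good σ
  have hlogpos : 0 < Real.logb 2 (H:ℝ) := by
    apply Real.logb_pos (by norm_num)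
    exact_mod_cast (by omega : 1 < H)
  have hlogle : Real.logb 2 (H:ℝ) ≤ 2*(L:ℝ) := by
    have h1 : (H:ℝ) ≤ (2:ℝ)^(L+1) := by exact_mod_cast hH2L.le
    have h2 : Real.logb 2 (H:ℝ) ≤ Real.logb 2 ((2:ℝ)^(L+1)) := by
      apply Real.logb_le_logb_of_le (by norm_num) (by positivity) h1
    have h3 : Real.logb 2 ((2:ℝ)^(L+1)) = (L:ℝ)+1 := by
      rw [show ((2:ℝ)^(L+1)) = (2:ℝ)^(((L+1:ℕ)):ℝ) from (Real.rpow_natCast 2 (L+1)).symm]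
      rw [Real.logb_rpow (by norm_num) (by norm_num)]
      push_cast
      ring
    have hL1R : (1:ℝ) ≤ (L:ℝ) := by exact_mod_cast hL1
    linarith
  set α : ℝ := 1000 / Real.logb 2 (H:ℝ) with hα
  have hαpos : 0 < α := by
    rw [hα]
    positivity
  have hbig : (9:ℝ) < α * ((L:ℝ)/(2*z)) := by
    have hLR : (1:ℝ) ≤ (L:ℝ) := by exact_mod_cast hL1
    have hz2 : (0:ℝ) < 2*z := by linarith
    have hYlb : (L:ℝ)/2 ≤ (L:ℝ)/(2*z) := by
      apply div_le_div_of_nonneg_left (by linarith) hz2 (by linarith)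
    have hαlb : 1000/(2*(L:ℝ)) ≤ α := by
      rw [hα]
      apply div_le_div_of_nonneg_left (by norm_num) hlogpos hlogle
    have h250 : (1000/(2*(L:ℝ))) * ((L:ℝ)/2) = 250 := by
      field_simp
      ring
    have hmul : (1000/(2*(L:ℝ))) * ((L:ℝ)/2) ≤ α * ((L:ℝ)/(2*z)) := by
      apply mul_le_mul hαlb hYlb (by positivity) hαpos.le
    rw [h250] at hmul
    linarith
  obtain ⟨σ, hσ⟩ : ∃ σ : Fin N → Fin L, Xv σ ≤ α * Yv σ := by
    by_contra hcon
    push_neg at hcon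
    haveI : Nonempty (Fin N → Fin L) := ⟨fun _ => ⟨0, hLpos⟩⟩
    have hstrict : ∑ σ : Fin N → Fin L, P σ * (α * Yv σ) <
        ∑ σ : Fin N → Fin L, P σ * Xv σ :=
      Finset.sum_lt_sum_of_nonempty Finset.univ_nonempty
        (fun σ _ => mul_lt_mul_of_pos_left (hcon σ) (hPpos σ))
    have hRHS : ∑ σ : Fin N → Fin L, P σ * (α * Yv σ) = α * ((L:ℝ)/(2*z)) := by
      calc ∑ σ : Fin N → Fin L, P σ * (α * Yv σ)
          = α * ∑ σ : Fin N → Fin L, P σ * Yv σ := by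
            rw [Finset.mul_sum]
            exact Finset.sum_congr rfl (fun σ _ => by ring)
        _ = α * ((L:ℝ)/(2*z)) := by rw [hEY]
    rw [hRHS] at hstrict
    linarith
  -- ### conclusion
  refine ⟨DD σ, unifD_isProbability hNpos _, ?_, ?_⟩
  · apply unifD_apply_of_mem hNpos
    intro w
    simp only [Set.mem_setOf_eq]
    intro j
    by_cases hj : j ∈ SS w
    · refine ⟨2^(lv (σ w)), Nat.one_le_two_pow, ?_, ?_⟩
      · have h1 : 2^(lv (σ w)) ≤ 2^L := by
          apply Nat.pow_le_pow_right (by norm_num)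
          have h2 := (σ w).isLt
          simp only [hlv]
          omega
        exact le_trans h1 h2L
      · simp only [hptf, vp, if_pos hj]
        push_cast
        ring
    · exact ⟨1, le_rfl, by omega, by simp [hptf, vp, hj]⟩
  · have hOPT := opt_lower hNpos SS s0 (by omega) hSScard hSSpair
      (fun w => lv (σ w)) (fun w => by simp [hlv])
    have hXeq : ∫ vs, Rev (DD σ) (A vs) ∂(Measure.pi fun _ : Fin t => DD σ) = Xv σ := rfl
    rw [hXeq]
    have hYOPT : Yv σ ≤ OPT (DD σ) := by
      rw [hYv]
      exact hOPT
    calc Xv σ ≤ α * Yv σ := hσ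
      _ ≤ α * OPT (DD σ) := mul_le_mul_of_nonneg_left hYOPT hαpos.le
      _ = 1000 * OPT (DD σ) / Real.logb 2 (H:ℝ) := by
        rw [hα]
        ring
end

section
/- Let H ≥ 2 be a real number, set K = ⌈log₂ H⌉, and let X be a real random variable with 1 ≤ X ≤ H almost surely. Then there exists an integer k with 0 ≤ k ≤ K such that 2^k · Pr[X ≥ 2^k] ≥ E[X] / (2(K + 1)). -/
open MeasureTheory Finset

/-- **Dyadic level-selection lemma.** If `1 ≤ X ≤ H` almost surely with `H ≥ 2` and
`K = ⌈log₂ H⌉`, then some power-of-two threshold `2^k` with `0 ≤ k ≤ K` satisfies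
`2^k · Pr[X ≥ 2^k] ≥ E[X] / (2(K + 1))`. -/
theorem dyadic_level_selection
    {Ω : Type*} [MeasurableSpace Ω] (μ : Measure Ω) [IsProbabilityMeasure μ]
    (H : ℝ) (hH : 2 ≤ H) (X : Ω → ℝ)
    (hX : ∀ᵐ ω ∂μ, 1 ≤ X ω ∧ X ω ≤ H) :
    ∃ k : ℕ, k ≤ ⌈Real.logb 2 H⌉₊ ∧
      (∫ ω, X ω ∂μ) / (2 * ((⌈Real.logb 2 H⌉₊ : ℝ) + 1)) ≤
        (2 : ℝ) ^ k * (μ {ω | (2 : ℝ) ^ k ≤ X ω}).toReal := by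
  classical
  set K := ⌈Real.logb 2 H⌉₊ with hKdef
  by_cases hint : Integrable X μ
  · obtain ⟨Y, hYm, hXY⟩ := hint.aestronglyMeasurable
    have hYmeas : Measurable Y := hYm.measurable
    have hY : ∀ᵐ ω ∂μ, 1 ≤ Y ω ∧ Y ω ≤ H := by
      filter_upwards [hX, hXY] with ω h1 h2
      rw [← h2]; exact h1
    have hHle : H ≤ (2 : ℝ) ^ K := by
      have h1 : Real.logb 2 H ≤ (K : ℝ) := Nat.le_ceil _
      have hHpos : (0 : ℝ) < H := lt_of_lt_of_le two_pos hH
      calc H = (2 : ℝ) ^ (Real.logb 2 H) :=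
            (Real.rpow_logb two_pos (by norm_num) hHpos).symm
        _ ≤ (2 : ℝ) ^ (K : ℝ) := Real.rpow_le_rpow_of_exponent_le one_le_two h1
        _ = (2 : ℝ) ^ K := by rw [Real.rpow_natCast]
    set g : Ω → ℝ := fun ω =>
      ∑ k ∈ range (K + 1),
        Set.indicator {ω' | (2 : ℝ) ^ k ≤ Y ω'} (fun _ => (2 : ℝ) ^ (k + 1)) ω with hg
    have hBmeas : ∀ k : ℕ, MeasurableSet {ω' | (2 : ℝ) ^ k ≤ Y ω'} := fun k =>
      measurableSet_le measurable_const hYmeas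
    have hginteg : Integrable g μ := by
      apply integrable_finset_sum
      intro k _
      exact (integrable_const _).indicator (hBmeas k)
    have hpt : ∀ᵐ ω ∂μ, X ω ≤ g ω := by
      filter_upwards [hY, hXY] with ω hb hxy
      obtain ⟨h1, h2⟩ := hb
      rw [hxy]
      set j := Nat.findGreatest (fun k => (2 : ℝ) ^ k ≤ Y ω) K with hj
      have hP0 : (2 : ℝ) ^ (0 : ℕ) ≤ Y ω := by simpa using h1
      have hPj : (2 : ℝ) ^ j ≤ Y ω :=
        Nat.findGreatest_spec (P := fun k => (2 : ℝ) ^ k ≤ Y ω) (Nat.zero_le K) hP0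
      have hjK : j ≤ K := Nat.findGreatest_le K
      have hupper : Y ω ≤ (2 : ℝ) ^ (j + 1) := by
        rcases eq_or_lt_of_le hjK with heq | hlt
        · calc Y ω ≤ H := h2
            _ ≤ (2 : ℝ) ^ K := hHle
            _ ≤ (2 : ℝ) ^ (j + 1) := by
                apply pow_le_pow_right₀ one_le_two
                omega
        · have hng : ¬ ((2 : ℝ) ^ (j + 1) ≤ Y ω) :=
            Nat.findGreatest_is_greatest (P := fun k => (2 : ℝ) ^ k ≤ Y ω) (n := K)
              (k := j + 1) (by rw [← hj]; omega) (by omega)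
          linarith
      have h2le : (2 : ℝ) ≤ 2 ^ (j + 1) := by
        calc (2 : ℝ) = 2 ^ 1 := (pow_one 2).symm
          _ ≤ 2 ^ (j + 1) := pow_le_pow_right₀ one_le_two (by omega)
      calc Y ω ≤ (2 : ℝ) ^ (j + 1) := hupper
        _ ≤ 2 * ((2 : ℝ) ^ (j + 1) - 1) := by linarith
        _ = ∑ k ∈ range (j + 1), (2 : ℝ) ^ (k + 1) := by
            rw [show (∑ k ∈ range (j + 1), (2 : ℝ) ^ (k + 1)) =
                2 * ∑ k ∈ range (j + 1), (2 : ℝ) ^ k by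
              rw [Finset.mul_sum]; exact Finset.sum_congr rfl fun k _ => by ring]
            rw [geom_sum_eq (by norm_num : (2 : ℝ) ≠ 1)]
            ring
        _ = ∑ k ∈ range (j + 1),
            Set.indicator {ω' | (2 : ℝ) ^ k ≤ Y ω'} (fun _ => (2 : ℝ) ^ (k + 1)) ω := by
            refine Finset.sum_congr rfl fun k hk => ?_
            rw [Set.indicator_of_mem]
            have hkj : k ≤ j := by simpa using Nat.lt_succ_iff.mp (Finset.mem_range.mp hk)
            exact le_trans (pow_le_pow_right₀ one_le_two hkj) hPj
        _ ≤ g ω := by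
            refine Finset.sum_le_sum_of_subset_of_nonneg
              (Finset.range_subset_range.mpr (by omega)) fun k _ _ => ?_
            exact Set.indicator_nonneg (fun _ _ => by positivity) ω
    have hkey : (∫ ω, X ω ∂μ) ≤
        ∑ k ∈ range (K + 1), (2 : ℝ) ^ (k + 1) * (μ {ω | (2 : ℝ) ^ k ≤ X ω}).toReal := by
      have hXg : (∫ ω, X ω ∂μ) ≤ ∫ ω, g ω ∂μ := integral_mono_ae hint hginteg hpt
      have hgval : (∫ ω, g ω ∂μ) =
          ∑ k ∈ range (K + 1), (2 : ℝ) ^ (k + 1) * (μ {ω' | (2 : ℝ) ^ k ≤ Y ω'}).toReal := by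
        rw [hg, integral_finset_sum _ (fun k _ => (integrable_const _).indicator (hBmeas k))]
        refine Finset.sum_congr rfl fun k _ => ?_
        rw [integral_indicator_const _ (hBmeas k)]
        simp [mul_comm]
        rfl
      have hsets : ∀ k : ℕ,
          μ {ω | (2 : ℝ) ^ k ≤ X ω} = μ {ω' | (2 : ℝ) ^ k ≤ Y ω'} := by
        intro k
        apply measure_congr
        filter_upwards [hXY] with ω h
        show ((2 : ℝ) ^ k ≤ X ω) = ((2 : ℝ) ^ k ≤ Y ω)
        rw [h]
      calc (∫ ω, X ω ∂μ) ≤ ∫ ω, g ω ∂μ := hXg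
        _ = ∑ k ∈ range (K + 1), (2 : ℝ) ^ (k + 1) * (μ {ω' | (2 : ℝ) ^ k ≤ Y ω'}).toReal :=
            hgval
        _ = ∑ k ∈ range (K + 1), (2 : ℝ) ^ (k + 1) * (μ {ω | (2 : ℝ) ^ k ≤ X ω}).toReal := by
            refine Finset.sum_congr rfl fun k _ => ?_
            rw [hsets k]
    by_contra hcon
    push_neg at hcon
    have hstrict : ∀ k ∈ range (K + 1),
        (2 : ℝ) ^ (k + 1) * (μ {ω | (2 : ℝ) ^ k ≤ X ω}).toReal <
          2 * ((∫ ω, X ω ∂μ) / (2 * ((K : ℝ) + 1))) := by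
      intro k hk
      have hklt := hcon k (by simpa using Nat.lt_succ_iff.mp (Finset.mem_range.mp hk))
      have : (2 : ℝ) ^ (k + 1) * (μ {ω | (2 : ℝ) ^ k ≤ X ω}).toReal =
          2 * ((2 : ℝ) ^ k * (μ {ω | (2 : ℝ) ^ k ≤ X ω}).toReal) := by ring
      rw [this]
      linarith
    have hsumlt : (∑ k ∈ range (K + 1),
        (2 : ℝ) ^ (k + 1) * (μ {ω | (2 : ℝ) ^ k ≤ X ω}).toReal) <
        (K + 1 : ℕ) * (2 * ((∫ ω, X ω ∂μ) / (2 * ((K : ℝ) + 1)))) := by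
      have := Finset.sum_lt_sum_of_nonempty (Finset.nonempty_range_iff.mpr (by omega)) hstrict
      simpa using this
    have hne : (2 : ℝ) * ((K : ℝ) + 1) ≠ 0 := by positivity
    have heq : ((K + 1 : ℕ) : ℝ) * (2 * ((∫ ω, X ω ∂μ) / (2 * ((K : ℝ) + 1)))) =
        ∫ ω, X ω ∂μ := by
      push_cast
      field_simp
    rw [heq] at hsumlt
    linarith
  · refine ⟨0, Nat.zero_le _, ?_⟩
    rw [integral_undef hint]
    simp
end
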